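/- arXiv:1812.03349 — 13 statements merged into one kernel-verified Lean document; each statement's English description precedes it below -/
import Mathlib

section
/- Let ξ be a sequence in H such that dom(ξ) is dense, and let T_ξ = C_ξ* C_ξ be the self-adjoint operator associated to the closed nonnegative form Ω_ξ. Then ξ is a frame if and only if dom(T_ξ) = H and T_ξ is surjective. -/
local notation "⟪" x ", " y "⟫" => @inner ℂ _ _ x y

open scoped ComplexConjugate

lemma stmt4_summable_mul {a b : ℕ → ℂ} (ha : Summable fun n => ‖a n‖ ^ 2)
    (hb : Summable fun n => ‖b n‖ ^ 2) : Summable fun n => a n * b n := by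
  refine Summable.of_norm (Summable.of_nonneg_of_le (fun n => norm_nonneg _)
    (fun n => ?_) ((ha.add hb).div_const 2))
  rw [norm_mul]
  have h := sq_nonneg (‖a n‖ - ‖b n‖)
  nlinarith [norm_nonneg (a n), norm_nonneg (b n)]

lemma stmt4_summable_mulnorm {a b : ℕ → ℂ} (ha : Summable fun n => ‖a n‖ ^ 2)
    (hb : Summable fun n => ‖b n‖ ^ 2) : Summable fun n => ‖a n‖ * ‖b n‖ := by
  refine Summable.of_nonneg_of_le (fun n => by positivity)
    (fun n => ?_) ((ha.add hb).div_const 2)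
  have h := sq_nonneg (‖a n‖ - ‖b n‖)
  nlinarith [norm_nonneg (a n), norm_nonneg (b n)]

lemma stmt4_cs_sq {a b : ℕ → ℂ} (ha : Summable fun n => ‖a n‖ ^ 2)
    (hb : Summable fun n => ‖b n‖ ^ 2) :
    ‖∑' n, a n * b n‖ ^ 2 ≤ (∑' n, ‖a n‖ ^ 2) * ∑' n, ‖b n‖ ^ 2 := by
  set α := ∑' n, ‖a n‖ ^ 2 with hα
  set β := ∑' n, ‖b n‖ ^ 2 with hβ
  have hα0 : 0 ≤ α := tsum_nonneg fun n => sq_nonneg _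
  have hβ0 : 0 ≤ β := tsum_nonneg fun n => sq_nonneg _
  have h1 : ‖∑' n, a n * b n‖ ≤ ∑' n, ‖a n‖ * ‖b n‖ := by
    calc ‖∑' n, a n * b n‖ ≤ ∑' n, ‖a n * b n‖ :=
          norm_tsum_le_tsum_norm (by simpa [norm_mul] using stmt4_summable_mulnorm ha hb)
      _ = ∑' n, ‖a n‖ * ‖b n‖ := by simp [norm_mul]
  have h2 : ∑' n, ‖a n‖ * ‖b n‖ ≤ Real.sqrt α * Real.sqrt β := by
    refine Summable.tsum_le_of_sum_le (stmt4_summable_mulnorm ha hb) fun s => ?_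
    have hcs := Finset.sum_mul_sq_le_sq_mul_sq s (fun n => ‖a n‖) (fun n => ‖b n‖)
    have hsa : ∑ i ∈ s, ‖a i‖ ^ 2 ≤ α := Summable.sum_le_tsum s (fun n _ => sq_nonneg _) ha
    have hsb : ∑ i ∈ s, ‖b i‖ ^ 2 ≤ β := Summable.sum_le_tsum s (fun n _ => sq_nonneg _) hb
    have hnn : 0 ≤ ∑ i ∈ s, ‖a i‖ * ‖b i‖ :=
      Finset.sum_nonneg fun i _ => by positivity
    calc ∑ i ∈ s, ‖a i‖ * ‖b i‖ = Real.sqrt ((∑ i ∈ s, ‖a i‖ * ‖b i‖) ^ 2) :=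
          (Real.sqrt_sq hnn).symm
      _ ≤ Real.sqrt (α * β) := by
          refine Real.sqrt_le_sqrt (hcs.trans ?_)
          exact mul_le_mul hsa hsb (Finset.sum_nonneg fun i _ => sq_nonneg _) hα0
      _ = Real.sqrt α * Real.sqrt β := Real.sqrt_mul hα0 β
  have h3 : ‖∑' n, a n * b n‖ ≤ Real.sqrt α * Real.sqrt β := h1.trans h2
  calc ‖∑' n, a n * b n‖ ^ 2 ≤ (Real.sqrt α * Real.sqrt β) ^ 2 := by
        exact pow_le_pow_left₀ (norm_nonneg _) h3 2
    _ = α * β := by rw [mul_pow, Real.sq_sqrt hα0, Real.sq_sqrt hβ0]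

lemma stmt4_exists_clm {H : Type*} [NormedAddCommGroup H] [InnerProductSpace ℂ H]
    [CompleteSpace H] (ξ : ℕ → H) (domT : Set H) (T : H → H)
    (hT1 : ∀ f ∈ domT, (Summable fun n => ‖⟪ξ n, f⟫‖ ^ 2) ∧
      ∀ g : H, (Summable fun n => ‖⟪ξ n, g⟫‖ ^ 2) →
        HasSum (fun n => ⟪ξ n, f⟫ * ⟪g, ξ n⟫) ⟪g, T f⟫)
    (hT2 : ∀ f : H, (Summable fun n => ‖⟪ξ n, f⟫‖ ^ 2) → ∀ h : H,
      (∀ g : H, (Summable fun n => ‖⟪ξ n, g⟫‖ ^ 2) →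
        HasSum (fun n => ⟪ξ n, f⟫ * ⟪g, ξ n⟫) ⟪g, h⟫) → f ∈ domT ∧ T f = h)
    (hall : ∀ f : H, Summable fun n => ‖⟪ξ n, f⟫‖ ^ 2)
    (hdom : ∀ f : H, f ∈ domT) :
    ∃ Tc : H →L[ℂ] H, (∀ f, Tc f = T f) ∧
      ∀ f, ⟪f, Tc f⟫ = ((∑' n, ‖⟪ξ n, f⟫‖ ^ 2 : ℝ) : ℂ) := by
  have hsum : ∀ f g : H, HasSum (fun n => ⟪ξ n, f⟫ * ⟪g, ξ n⟫) ⟪g, T f⟫ :=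
    fun f g => (hT1 f (hdom f)).2 g (hall g)
  have hadd : ∀ f g : H, T (f + g) = T f + T g := by
    intro f g
    refine (hT2 (f + g) (hall _) (T f + T g) fun g' _ => ?_).2
    have h := (hsum f g').add (hsum g g')
    simpa [inner_add_right, add_mul] using h
  have hsmul : ∀ (c : ℂ) (f : H), T (c • f) = c • T f := by
    intro c f
    refine (hT2 (c • f) (hall _) (c • T f) fun g' _ => ?_).2
    have h := (hsum f g').mul_left c
    simpa [inner_smul_right, mul_assoc] using h
  let Tl : H →ₗ[ℂ] H :=
    { toFun := T, map_add' := hadd, map_smul' := fun c f => by simp [hsmul c f] }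
  have hsym : Tl.IsSymmetric := by
    intro f g
    have h1 : HasSum (fun n => conj (⟪ξ n, f⟫ * ⟪g, ξ n⟫)) (conj ⟪g, T f⟫) :=
      Complex.hasSum_conj'.2 (hsum f g)
    have h1' : HasSum (fun n => ⟪ξ n, g⟫ * ⟪f, ξ n⟫) ⟪T f, g⟫ := by
      have e1 : ∀ n : ℕ, conj (⟪ξ n, f⟫ * ⟪g, ξ n⟫) = ⟪ξ n, g⟫ * ⟪f, ξ n⟫ := by
        intro n
        rw [map_mul, inner_conj_symm, inner_conj_symm, mul_comm]
      have e2 : conj ⟪g, T f⟫ = ⟪T f, g⟫ := inner_conj_symm _ _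
      rw [← e2]
      exact h1.congr_fun fun n => (e1 n).symm
    have h2 := hsum g f
    exact h1'.unique h2
  have hcont : Continuous Tl := hsym.continuous
  refine ⟨⟨Tl, hcont⟩, fun f => rfl, fun f => ?_⟩
  have h1 := hsum f f
  have h1' : HasSum (fun n => ((‖⟪ξ n, f⟫‖ ^ 2 : ℝ) : ℂ)) ⟪f, T f⟫ := by
    refine h1.congr_fun fun n => ?_
    rw [← inner_conj_symm f (ξ n), Complex.mul_conj]
    norm_cast
    rw [← Complex.sq_norm]
  have h2 : HasSum (fun n => ((‖⟪ξ n, f⟫‖ ^ 2 : ℝ) : ℂ))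
      ((∑' n, ‖⟪ξ n, f⟫‖ ^ 2 : ℝ) : ℂ) := Complex.hasSum_ofReal.2 (hall f).hasSum
  exact h1'.unique h2

/-- Let `ξ` have dense domain `dom(ξ)` and let `T_ξ = C_ξ*C_ξ` be the operator associated to
the closed nonnegative form `Ω_ξ` (characterized by: `f ∈ dom(T_ξ)` with `T_ξ f = h` iff
`f ∈ dom(ξ)` and `Ω_ξ(f,g) = ⟨h,g⟩` for all `g ∈ dom(ξ)`). Then `ξ` is a frame if and only
if `dom(T_ξ) = H` and `T_ξ` is surjective. -/
theorem stmt4 {H : Type*} [NormedAddCommGroup H] [InnerProductSpace ℂ H] [CompleteSpace H]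
    (ξ : ℕ → H)
    (hdense : Dense {f : H | Summable fun n => ‖⟪ξ n, f⟫‖ ^ 2})
    (domT : Set H) (T : H → H)
    (hT1 : ∀ f ∈ domT, (Summable fun n => ‖⟪ξ n, f⟫‖ ^ 2) ∧
      ∀ g : H, (Summable fun n => ‖⟪ξ n, g⟫‖ ^ 2) →
        HasSum (fun n => ⟪ξ n, f⟫ * ⟪g, ξ n⟫) ⟪g, T f⟫)
    (hT2 : ∀ f : H, (Summable fun n => ‖⟪ξ n, f⟫‖ ^ 2) → ∀ h : H,
      (∀ g : H, (Summable fun n => ‖⟪ξ n, g⟫‖ ^ 2) →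
        HasSum (fun n => ⟪ξ n, f⟫ * ⟪g, ξ n⟫) ⟪g, h⟫) → f ∈ domT ∧ T f = h) :
    (∃ A > (0 : ℝ), ∃ B > (0 : ℝ), ∀ f : H, (Summable fun n => ‖⟪ξ n, f⟫‖ ^ 2) ∧
        A * ‖f‖ ^ 2 ≤ ∑' n, ‖⟪ξ n, f⟫‖ ^ 2 ∧ ∑' n, ‖⟪ξ n, f⟫‖ ^ 2 ≤ B * ‖f‖ ^ 2)
    ↔ (domT = Set.univ ∧ Function.Surjective T) := by
  have hΩnn : ∀ f : H, (0 : ℝ) ≤ ∑' n, ‖⟪ξ n, f⟫‖ ^ 2 :=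
    fun f => tsum_nonneg fun n => sq_nonneg _
  constructor
  · rintro ⟨A, hA, B, hB, hfr⟩
    have hall : ∀ f : H, Summable fun n => ‖⟪ξ n, f⟫‖ ^ 2 := fun f => (hfr f).1
    have hswap : ∀ f : H, Summable fun n => ‖⟪f, ξ n⟫‖ ^ 2 := by
      intro f
      have e : (fun n => ‖⟪f, ξ n⟫‖ ^ 2) = fun n => ‖⟪ξ n, f⟫‖ ^ 2 :=
        funext fun n => by rw [norm_inner_symm]
      rw [e]; exact hall f
    have hone : ∀ f : H, f ∈ domT := by
      intro f
      have hsums : ∀ g : H, Summable fun n => ⟪f, ξ n⟫ * ⟪ξ n, g⟫ := fun g =>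
        stmt4_summable_mul (hswap f) (hall g)
      let Φl : H →ₗ[ℂ] ℂ :=
        { toFun := fun g => ∑' n, ⟪f, ξ n⟫ * ⟪ξ n, g⟫
          map_add' := fun g₁ g₂ => by
            simp only [inner_add_right, mul_add]
            exact Summable.tsum_add (hsums g₁) (hsums g₂)
          map_smul' := fun c g => by
            simp only [inner_smul_right, RingHom.id_apply, smul_eq_mul, mul_left_comm]
            exact tsum_mul_left
          }
      have etsum : (∑' n, ‖⟪f, ξ n⟫‖ ^ 2) = ∑' n, ‖⟪ξ n, f⟫‖ ^ 2 :=
        tsum_congr fun n => by rw [norm_inner_symm]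
      have hα0 : (0 : ℝ) ≤ ∑' n, ‖⟪ξ n, f⟫‖ ^ 2 := hΩnn f
      have hbound : ∀ g : H,
          ‖Φl g‖ ≤ (Real.sqrt (∑' n, ‖⟪ξ n, f⟫‖ ^ 2) * Real.sqrt B) * ‖g‖ := by
        intro g
        have hcs := stmt4_cs_sq (hswap f) (hall g)
        rw [etsum] at hcs
        have hg : (∑' n, ‖⟪ξ n, g⟫‖ ^ 2) ≤ B * ‖g‖ ^ 2 := (hfr g).2.2
        have h2 : ‖Φl g‖ ^ 2 ≤ (∑' n, ‖⟪ξ n, f⟫‖ ^ 2) * (B * ‖g‖ ^ 2) :=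
          hcs.trans (mul_le_mul_of_nonneg_left hg hα0)
        calc ‖Φl g‖ = Real.sqrt (‖Φl g‖ ^ 2) := (Real.sqrt_sq (norm_nonneg _)).symm
          _ ≤ Real.sqrt ((∑' n, ‖⟪ξ n, f⟫‖ ^ 2) * (B * ‖g‖ ^ 2)) := Real.sqrt_le_sqrt h2
          _ = (Real.sqrt (∑' n, ‖⟪ξ n, f⟫‖ ^ 2) * Real.sqrt B) * ‖g‖ := by
              rw [Real.sqrt_mul hα0, Real.sqrt_mul hB.le, Real.sqrt_sq (norm_nonneg g),
                mul_assoc]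
      let Φ : H →L[ℂ] ℂ := Φl.mkContinuous _ hbound
      let h : H := (InnerProductSpace.toDual ℂ H).symm Φ
      have hprop : ∀ g : H, (Summable fun n => ‖⟪ξ n, g⟫‖ ^ 2) →
          HasSum (fun n => ⟪ξ n, f⟫ * ⟪g, ξ n⟫) ⟪g, h⟫ := by
        intro g _
        have h0 : HasSum (fun n => ⟪f, ξ n⟫ * ⟪ξ n, g⟫) (Φ g) := (hsums g).hasSum
        have h1 : HasSum (fun n => conj (⟪f, ξ n⟫ * ⟪ξ n, g⟫)) (conj (Φ g)) :=
          Complex.hasSum_conj'.2 h0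
        have h2 : ⟪g, h⟫ = conj (Φ g) := by
          rw [← inner_conj_symm]
          congr 1
          exact InnerProductSpace.toDual_symm_apply
        rw [h2]
        refine h1.congr_fun fun n => ?_
        rw [map_mul, inner_conj_symm, inner_conj_symm]
      exact (hT2 f (hall f) h hprop).1
    obtain ⟨Tc, hTc, hinner⟩ := stmt4_exists_clm ξ domT T hT1 hT2 hall hone
    refine ⟨Set.eq_univ_iff_forall.2 hone, ?_⟩
    have hnorm : ∀ f : H, (∑' n, ‖⟪ξ n, f⟫‖ ^ 2) = ‖⟪f, Tc f⟫‖ := by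
      intro f
      rw [hinner f, Complex.norm_real, Real.norm_eq_abs, abs_of_nonneg (hΩnn f)]
    have hlow : ∀ f : H, A * ‖f‖ ^ 2 ≤ ‖f‖ * ‖Tc f‖ := by
      intro f
      have h1 : A * ‖f‖ ^ 2 ≤ ∑' n, ‖⟪ξ n, f⟫‖ ^ 2 := (hfr f).2.1
      rw [hnorm f] at h1
      exact h1.trans (norm_inner_le_norm f (Tc f))
    have hanti : AntilipschitzWith (⟨A, hA.le⟩ : NNReal)⁻¹ Tc := by
      refine ContinuousLinearMap.antilipschitz_of_bound Tc fun f => ?_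
      have hcoe : (((⟨A, hA.le⟩ : NNReal)⁻¹ : NNReal) : ℝ) = A⁻¹ := by
        exact NNReal.coe_inv ⟨A, hA.le⟩
      rw [hcoe]
      rcases eq_or_ne f 0 with rfl | hne
      · simp [inv_nonneg.2 hA.le]
      · have hf : 0 < ‖f‖ := norm_pos_iff.2 hne
        have h3 : A * ‖f‖ ≤ ‖Tc f‖ := by nlinarith [hlow f]
        calc ‖f‖ = A⁻¹ * (A * ‖f‖) := by field_simp
          _ ≤ A⁻¹ * ‖Tc f‖ := mul_le_mul_of_nonneg_left h3 (inv_nonneg.2 hA.le)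
    have hclosed : IsClosed (Set.range Tc) := hanti.isClosed_range Tc.uniformContinuous
    set K : Submodule ℂ H := LinearMap.range (Tc : H →ₗ[ℂ] H) with hK
    have hKset : (K : Set H) = Set.range Tc := LinearMap.coe_range _
    haveI : CompleteSpace K := (hKset ▸ hclosed).completeSpace_coe
    have horth : Kᗮ = ⊥ := by
      rw [Submodule.eq_bot_iff]
      intro g hg
      have h0 : ⟪Tc g, g⟫ = 0 :=
        (Submodule.mem_orthogonal K g).1 hg (Tc g) (LinearMap.mem_range_self _ g)
      have h0' : ⟪g, Tc g⟫ = 0 := by rw [← inner_conj_symm, h0, map_zero]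
      have h1 : (∑' n, ‖⟪ξ n, g⟫‖ ^ 2) = 0 := by
        have h2 := hinner g
        rw [h0'] at h2
        exact_mod_cast h2.symm
      have h2 := (hfr g).2.1
      have h5 : ‖g‖ ^ 2 ≤ 0 :=
        le_of_mul_le_mul_left (by linarith : A * ‖g‖ ^ 2 ≤ A * 0) hA
      have h6 : ‖g‖ ^ 2 = 0 := le_antisymm h5 (sq_nonneg _)
      have h7 : ‖g‖ = 0 := by
        nlinarith [norm_nonneg g]
      exact norm_eq_zero.1 h7
    have htop : K = ⊤ := Submodule.orthogonal_eq_bot_iff.1 horth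
    intro y
    have hy : y ∈ K := by rw [htop]; trivial
    obtain ⟨x, hx⟩ := hy
    exact ⟨x, by rw [← hTc x]; exact hx⟩
  · rintro ⟨hdomu, hsurj⟩
    have hone : ∀ f : H, f ∈ domT := fun f => hdomu ▸ Set.mem_univ f
    have hall : ∀ f : H, Summable fun n => ‖⟪ξ n, f⟫‖ ^ 2 := fun f => (hT1 f (hone f)).1
    have hswap : ∀ f : H, Summable fun n => ‖⟪f, ξ n⟫‖ ^ 2 := by
      intro f
      have e : (fun n => ‖⟪f, ξ n⟫‖ ^ 2) = fun n => ‖⟪ξ n, f⟫‖ ^ 2 :=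
        funext fun n => by rw [norm_inner_symm]
      rw [e]; exact hall f
    obtain ⟨Tc, hTc, hinner⟩ := stmt4_exists_clm ξ domT T hT1 hT2 hall hone
    have hnorm : ∀ f : H, (∑' n, ‖⟪ξ n, f⟫‖ ^ 2) = ‖⟪f, Tc f⟫‖ := by
      intro f
      rw [hinner f, Complex.norm_real, Real.norm_eq_abs, abs_of_nonneg (hΩnn f)]
    have hker : LinearMap.ker (Tc : H →ₗ[ℂ] H) = ⊥ := by
      rw [LinearMap.ker_eq_bot']
      intro f hf0
      change Tc f = 0 at hf0
      have h1 : (∑' n, ‖⟪ξ n, f⟫‖ ^ 2) = 0 := by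
        have h2 := hinner f
        rw [hf0, inner_zero_right] at h2
        exact_mod_cast h2.symm
      have hterm : ∀ n, ⟪ξ n, f⟫ = 0 := by
        intro n
        have h3 : ‖⟪ξ n, f⟫‖ ^ 2 ≤ 0 := h1 ▸ Summable.le_tsum (hall f) n fun m _ => sq_nonneg _
        have h4 : ‖⟪ξ n, f⟫‖ = 0 := by
          nlinarith [norm_nonneg (⟪ξ n, f⟫), sq_nonneg ‖⟪ξ n, f⟫‖]
        exact norm_eq_zero.1 h4
      obtain ⟨g, hg⟩ := hsurj f
      have h5 : HasSum (fun n => ⟪ξ n, g⟫ * ⟪f, ξ n⟫) ⟪f, T g⟫ :=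
        (hT1 g (hone g)).2 f (hall f)
      have h6 : HasSum (fun _ : ℕ => (0 : ℂ)) ⟪f, T g⟫ := by
        refine h5.congr_fun fun n => ?_
        rw [← inner_conj_symm f (ξ n), hterm n]
        simp
      have h7 : ⟪f, T g⟫ = (0 : ℂ) := (h6.unique hasSum_zero).symm.symm
      rw [hg] at h7
      exact inner_self_eq_zero.1 h7
    have hrange : LinearMap.range (Tc : H →ₗ[ℂ] H) = ⊤ := by
      rw [LinearMap.range_eq_top]
      intro y
      obtain ⟨x, hx⟩ := hsurj y
      exact ⟨x, by change Tc x = y; rw [hTc x]; exact hx⟩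
    let e : H ≃L[ℂ] H := ContinuousLinearEquiv.ofBijective Tc hker hrange
    set S : H →L[ℂ] H := e.symm.toContinuousLinearMap with hS
    refine ⟨(‖S‖ + 1)⁻¹, by positivity, ‖Tc‖ + 1, by positivity, fun f => ?_⟩
    refine ⟨hall f, ?_, ?_⟩
    · set u := e.symm f with hu
      have hTu : Tc u = f := e.apply_symm_apply f
      have hTu' : T u = f := by rw [← hTc u]; exact hTu
      have h1 : HasSum (fun n => ⟪ξ n, u⟫ * ⟪f, ξ n⟫) ⟪f, T u⟫ :=
        (hT1 u (hone u)).2 f (hall f)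
      rw [hTu'] at h1
      have hts : ⟪f, f⟫ = ∑' n, ⟪ξ n, u⟫ * ⟪f, ξ n⟫ := h1.tsum_eq.symm
      have hcs := stmt4_cs_sq (hall u) (hswap f)
      have etsum : (∑' n, ‖⟪f, ξ n⟫‖ ^ 2) = ∑' n, ‖⟪ξ n, f⟫‖ ^ 2 :=
        tsum_congr fun n => by rw [norm_inner_symm]
      rw [etsum, ← hts] at hcs
      have hff : ‖⟪f, f⟫‖ = ‖f‖ ^ 2 := by
        rw [inner_self_eq_norm_sq_to_K]
        simp [norm_pow, Complex.norm_real, abs_of_nonneg (norm_nonneg f)]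
      rw [hff] at hcs
      have hub : ‖u‖ ≤ ‖S‖ * ‖f‖ := S.le_opNorm f
      have hsu : (∑' n, ‖⟪ξ n, u⟫‖ ^ 2) ≤ ‖S‖ * ‖f‖ ^ 2 := by
        rw [hnorm u, hTu]
        calc ‖⟪u, f⟫‖ ≤ ‖u‖ * ‖f‖ := norm_inner_le_norm _ _
          _ ≤ ‖S‖ * ‖f‖ * ‖f‖ := mul_le_mul_of_nonneg_right hub (norm_nonneg f)
          _ = ‖S‖ * ‖f‖ ^ 2 := by ring
      have hΩf := hΩnn f
      rcases eq_or_ne f 0 with rfl | hne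
      · simp
      · have hf2 : 0 < ‖f‖ ^ 2 := pow_pos (norm_pos_iff.2 hne) 2
        have hfin : (‖f‖ ^ 2) ^ 2 ≤ (‖S‖ * ‖f‖ ^ 2) * ∑' n, ‖⟪ξ n, f⟫‖ ^ 2 :=
          hcs.trans (mul_le_mul_of_nonneg_right hsu hΩf)
        rw [inv_mul_le_iff₀ (by positivity)]
        nlinarith [norm_nonneg S, mul_nonneg (norm_nonneg S) hΩf]
    · rw [hnorm f]
      calc ‖⟪f, Tc f⟫‖ ≤ ‖f‖ * ‖Tc f‖ := norm_inner_le_norm _ _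
        _ ≤ ‖f‖ * (‖Tc‖ * ‖f‖) := mul_le_mul_of_nonneg_left (Tc.le_opNorm f) (norm_nonneg f)
        _ ≤ (‖Tc‖ + 1) * ‖f‖ ^ 2 := by nlinarith [sq_nonneg ‖f‖]
end

section
/- Let ξ be a sequence with dom(ξ) dense and T_ξ = C_ξ*C_ξ. Then ξ is a lower semi-frame with bound A > 0 (i.e. A‖f‖² ≤ Σₙ|⟨f,ξₙ⟩|² for all f ∈ H) if and only if 0 ∈ ρ(T_ξ) and ‖T_ξ⁻¹‖ ≤ A⁻¹. -/
local notation "⟪" x ", " y "⟫" => @inner ℂ _ _ x y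

open scoped ComplexConjugate ENNReal
open RCLike
set_option maxHeartbeats 1000000
set_option synthInstance.maxHeartbeats 400000
set_option linter.unusedSectionVars false

section Aux
variable {H : Type*} [NormedAddCommGroup H] [InnerProductSpace ℂ H] [CompleteSpace H]


noncomputable def domSub (ξ : ℕ → H) : Submodule ℂ H where
  carrier := {f | Summable fun n => ‖⟪ξ n, f⟫‖ ^ 2}
  zero_mem' := by simp [summable_zero]
  add_mem' := by
    intro a b ha hb
    refine Summable.of_nonneg_of_le (fun n => by positivity)
      (fun n => ?_) (((ha.add hb)).mul_left 2)
    simp only [inner_add_right]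
    calc ‖⟪ξ n, a⟫ + ⟪ξ n, b⟫‖ ^ 2 ≤ (‖⟪ξ n, a⟫‖ + ‖⟪ξ n, b⟫‖) ^ 2 := by
          gcongr; exact norm_add_le _ _
      _ ≤ 2 * (‖⟪ξ n, a⟫‖ ^ 2 + ‖⟪ξ n, b⟫‖ ^ 2) := by
          nlinarith [sq_nonneg (‖⟪ξ n, a⟫‖ - ‖⟪ξ n, b⟫‖)]
  smul_mem' := by
    intro c f hf
    simp only [Set.mem_setOf_eq, inner_smul_right, norm_mul, mul_pow] at *
    exact hf.mul_left _

theorem memlp (ξ : ℕ → H) (f : domSub ξ) : Memℓp (fun n => ⟪ξ n, (f : H)⟫) 2 := by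
  apply memℓp_gen
  refine f.2.congr fun n => ?_
  rw [show (2:ℝ≥0∞).toReal = ((2:ℕ):ℝ) by norm_num, Real.rpow_natCast]

noncomputable def Cl (ξ : ℕ → H) : domSub ξ →ₗ[ℂ] lp (fun _ : ℕ => ℂ) 2 where
  toFun f := ⟨fun n => ⟪ξ n, (f : H)⟫, memlp ξ f⟩
  map_add' f g := by
    refine lp.ext (funext fun n => ?_)
    simp only [lp.coeFn_add, Pi.add_apply]
    exact inner_add_right _ _ _
  map_smul' c f := by
    refine lp.ext (funext fun n => ?_)
    simp only [lp.coeFn_smul, Pi.smul_apply, RingHom.id_apply, smul_eq_mul]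
    exact inner_smul_right _ _ _

theorem Cl_apply (ξ : ℕ → H) (f : domSub ξ) (n : ℕ) : (Cl ξ f) n = ⟪ξ n, (f:H)⟫ := rfl

theorem hasSum_norm_Cl (ξ : ℕ → H) (f : domSub ξ) :
    HasSum (fun n => ‖⟪ξ n, (f:H)⟫‖ ^ 2) (‖Cl ξ f‖ ^ 2) := by
  have := (lp.hasSum_inner (𝕜 := ℂ) (Cl ξ f) (Cl ξ f)).mapL (reCLM (K := ℂ))
  simp only [reCLM_apply, inner_self_eq_norm_sq] at this
  exact this

theorem exists_preimage (ξ : ℕ → H) (A : ℝ) (hA : 0 < A)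
    (hlow : ∀ f : H, (Summable fun n => ‖⟪ξ n, f⟫‖ ^ 2) → A * ‖f‖ ^ 2 ≤ ∑' n, ‖⟪ξ n, f⟫‖ ^ 2)
    (h : H) :
    ∃ u : H, (Summable fun n => ‖⟪ξ n, u⟫‖ ^ 2) ∧
      ∀ g : H, (Summable fun n => ‖⟪ξ n, g⟫‖ ^ 2) →
        HasSum (fun n => ⟪ξ n, u⟫ * ⟪g, ξ n⟫) ⟪g, h⟫ := by
  classical
  have hlow' : ∀ f : domSub ξ, A * ‖(f:H)‖ ^ 2 ≤ ‖Cl ξ f‖ ^ 2 := by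
    intro f
    have h1 := hlow f f.2
    rwa [(hasSum_norm_Cl ξ f).tsum_eq] at h1
  have hnb : ∀ f : domSub ξ, ‖(f:H)‖ ≤ Real.sqrt A⁻¹ * ‖Cl ξ f‖ := by
    intro f
    have h1 : ‖(f:H)‖ ^ 2 ≤ A⁻¹ * ‖Cl ξ f‖ ^ 2 := by
      rw [inv_mul_eq_div, le_div_iff₀ hA]
      linarith [hlow' f, mul_comm A (‖(f:H)‖ ^ 2)]
    calc ‖(f:H)‖ = Real.sqrt (‖(f:H)‖ ^ 2) := (Real.sqrt_sq (norm_nonneg _)).symm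
      _ ≤ Real.sqrt (A⁻¹ * ‖Cl ξ f‖ ^ 2) := Real.sqrt_le_sqrt h1
      _ = Real.sqrt A⁻¹ * ‖Cl ξ f‖ := by
          rw [Real.sqrt_mul (by positivity), Real.sqrt_sq (norm_nonneg _)]
  have hinj : Function.Injective (Cl ξ) := by
    intro a b hab
    have h1 : Cl ξ (a - b) = 0 := by rw [map_sub, hab, sub_self]
    have h2 := hnb (a - b)
    rw [h1, norm_zero, mul_zero] at h2
    have h3 : ((a - b : domSub ξ) : H) = 0 := norm_le_zero_iff.mp h2
    have h4 : a - b = 0 := Subtype.ext (by simpa using h3)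
    exact sub_eq_zero.mp h4
  -- the range of Cl is closed
  set K : Submodule ℂ (lp (fun _ : ℕ => ℂ) 2) := LinearMap.range (Cl ξ) with hKdef
  have hK : IsClosed (K : Set (lp (fun _ : ℕ => ℂ) 2)) := by
    apply IsSeqClosed.isClosed
    intro w L hw hL
    choose F hF using hw
    have hwc : CauchySeq w := hL.cauchySeq
    have hcauchy : CauchySeq (fun k => ((F k : H))) := by
      rw [Metric.cauchySeq_iff]
      intro ε hε
      have hc : 0 < Real.sqrt A⁻¹ + 1 := by positivity
      obtain ⟨N, hN⟩ := Metric.cauchySeq_iff.mp hwc (ε / (Real.sqrt A⁻¹ + 1)) (by positivity)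
      refine ⟨N, fun m hm n hn => ?_⟩
      have h5 : dist ((F m : H)) ((F n : H)) ≤ Real.sqrt A⁻¹ * dist (w m) (w n) := by
        rw [dist_eq_norm, dist_eq_norm]
        have h5a := hnb (F m - F n)
        rw [map_sub, hF, hF] at h5a
        simpa using h5a
      have h6 := hN m hm n hn
      have h7 : Real.sqrt A⁻¹ * dist (w m) (w n) <
          (Real.sqrt A⁻¹ + 1) * (ε / (Real.sqrt A⁻¹ + 1)) := by
        have h7a := dist_nonneg (x := w m) (y := w n)
        have h7b : (0:ℝ) < ε / (Real.sqrt A⁻¹ + 1) := by positivity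
        nlinarith [Real.sqrt_nonneg A⁻¹]
      rw [mul_div_cancel₀ _ (ne_of_gt hc)] at h7
      exact lt_of_le_of_lt h5 h7
    obtain ⟨f, hf⟩ := cauchySeq_tendsto_of_complete hcauchy
    have hcoord : ∀ n, Filter.Tendsto (fun k => (w k) n) Filter.atTop (nhds (L n)) := by
      intro n
      rw [tendsto_iff_dist_tendsto_zero]
      have hb : ∀ k, dist ((w k) n) (L n) ≤ dist (w k) L := by
        intro k
        rw [dist_eq_norm, dist_eq_norm]
        have hb1 := lp.norm_apply_le_norm (show (2:ℝ≥0∞) ≠ 0 by norm_num) (w k - L) n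
        simpa using hb1
      refine squeeze_zero (fun k => dist_nonneg) hb ?_
      rwa [← tendsto_iff_dist_tendsto_zero]
    have hLn : ∀ n, ⟪ξ n, f⟫ = L n := by
      intro n
      have h8 : Filter.Tendsto (fun k => ⟪ξ n, (F k : H)⟫) Filter.atTop (nhds ⟪ξ n, f⟫) :=
        Filter.Tendsto.inner tendsto_const_nhds hf
      have h9 : (fun k => ⟪ξ n, (F k : H)⟫) = fun k => (w k) n := by
        funext k; rw [← hF k]; rfl
      rw [h9] at h8
      exact tendsto_nhds_unique h8 (hcoord n)
    have hfD : f ∈ domSub ξ := by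
      have h10 : Summable fun n => ‖L n‖ ^ ((2:ℝ≥0∞).toReal) :=
        (memℓp_gen_iff (by norm_num)).mp (lp.memℓp L)
      have h11 : Summable fun n => ‖L n‖ ^ 2 := by
        refine h10.congr fun n => ?_
        rw [show (2:ℝ≥0∞).toReal = ((2:ℕ):ℝ) by norm_num, Real.rpow_natCast]
      refine h11.congr fun n => ?_
      rw [hLn n]
    exact ⟨⟨f, hfD⟩, lp.ext (funext fun n => hLn n)⟩
  haveI : CompleteSpace K := hK.completeSpace_coe
  -- inverse map on the range
  have hmem : ∀ w : K, ∃ y : domSub ξ, Cl ξ y = (w : lp (fun _ : ℕ => ℂ) 2) := fun w => w.2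
  set R : K → domSub ξ := fun w => Classical.choose (hmem w) with hRdef
  have hCR : ∀ w : K, Cl ξ (R w) = (w : lp (fun _ : ℕ => ℂ) 2) := fun w => Classical.choose_spec (hmem w)
  have hRC : ∀ (g : domSub ξ) (w : K), (w : lp (fun _ : ℕ => ℂ) 2) = Cl ξ g → R w = g := by
    intro g w hwg
    exact hinj (by rw [hCR w, hwg])
  have hRadd : ∀ w1 w2 : K, R (w1 + w2) = R w1 + R w2 := by
    intro w1 w2
    apply hinj
    rw [hCR, map_add, hCR, hCR, Submodule.coe_add]
  have hRsmul : ∀ (c : ℂ) (w : K), R (c • w) = c • R w := by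
    intro c w
    apply hinj
    rw [hCR, map_smul, hCR, Submodule.coe_smul]
  -- the bounded functional
  set φ₀ : K →ₗ[ℂ] ℂ :=
    { toFun := fun w => ⟪h, ((R w : domSub ξ) : H)⟫
      map_add' := by
        intro w1 w2
        show ⟪h, ((R (w1 + w2) : domSub ξ) : H)⟫
          = ⟪h, ((R w1 : domSub ξ) : H)⟫ + ⟪h, ((R w2 : domSub ξ) : H)⟫
        rw [hRadd, Submodule.coe_add, inner_add_right]
      map_smul' := by
        intro c w
        show ⟪h, ((R (c • w) : domSub ξ) : H)⟫ = RingHom.id ℂ c * ⟪h, ((R w : domSub ξ) : H)⟫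
        rw [hRsmul, Submodule.coe_smul, inner_smul_right, RingHom.id_apply] } with hφ₀def
  have hφ₀bound : ∀ w : K, ‖φ₀ w‖ ≤ (‖h‖ * Real.sqrt A⁻¹) * ‖w‖ := by
    intro w
    have h12 : ‖φ₀ w‖ ≤ ‖h‖ * ‖((R w : domSub ξ) : H)‖ := norm_inner_le_norm _ _
    have h13 : ‖((R w : domSub ξ) : H)‖ ≤ Real.sqrt A⁻¹ * ‖w‖ := by
      have h13a := hnb (R w)
      rwa [hCR w] at h13a
    calc ‖φ₀ w‖ ≤ ‖h‖ * ‖((R w : domSub ξ) : H)‖ := h12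
      _ ≤ ‖h‖ * (Real.sqrt A⁻¹ * ‖w‖) := mul_le_mul_of_nonneg_left h13 (norm_nonneg h)
      _ = (‖h‖ * Real.sqrt A⁻¹) * ‖w‖ := by ring
  set φ : K →L[ℂ] ℂ := LinearMap.mkContinuous φ₀ (‖h‖ * Real.sqrt A⁻¹) hφ₀bound with hφdef
  set v : K := (InnerProductSpace.toDual ℂ K).symm φ with hvdef
  have hv : ∀ w : K, ⟪v, w⟫ = φ w := fun w => InnerProductSpace.toDual_symm_apply
  set u : domSub ξ := R v with hudef
  refine ⟨(u : H), u.2, ?_⟩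
  intro g hg
  set gD : domSub ξ := ⟨g, hg⟩ with hgDdef
  have hgK : Cl ξ gD ∈ K := ⟨gD, rfl⟩
  set w : K := ⟨Cl ξ gD, hgK⟩ with hwdef
  have h15 : ⟪v, w⟫ = ⟪h, g⟫ := by
    rw [hv w]
    have h15a : R w = gD := hRC gD w rfl
    show ⟪h, ((R w : domSub ξ) : H)⟫ = ⟪h, g⟫
    rw [h15a]
  have h17 : ⟪(Cl ξ u : lp (fun _ : ℕ => ℂ) 2), (Cl ξ gD : lp (fun _ : ℕ => ℂ) 2)⟫ = ⟪h, g⟫ := by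
    have h16 : ⟪(v : lp (fun _ : ℕ => ℂ) 2), (Cl ξ gD : lp (fun _ : ℕ => ℂ) 2)⟫ = ⟪h, g⟫ := h15
    rw [hudef, hCR v]
    exact h16
  have h18 : ⟪(Cl ξ gD : lp (fun _ : ℕ => ℂ) 2), (Cl ξ u : lp (fun _ : ℕ => ℂ) 2)⟫ = ⟪g, h⟫ := by
    have h18a := congrArg (starRingEnd ℂ) h17
    rwa [inner_conj_symm, inner_conj_symm] at h18a
  have h19 := lp.hasSum_inner (𝕜 := ℂ) (Cl ξ gD) (Cl ξ u)
  rw [h18] at h19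
  have h20 : (fun n => ⟪ξ n, (u:H)⟫ * ⟪g, ξ n⟫)
      = fun n => ⟪(Cl ξ gD) n, (Cl ξ u) n⟫ := by
    funext n
    rw [Cl_apply, Cl_apply, RCLike.inner_apply]
    show ⟪ξ n, (u:H)⟫ * ⟪g, ξ n⟫ = ⟪ξ n, (u:H)⟫ * conj ⟪ξ n, g⟫
    rw [inner_conj_symm (𝕜 := ℂ) g (ξ n)]
  rw [h20]
  exact h19

theorem re_mul_conj_inner (x y : H) : re (⟪y, x⟫ * ⟪x, y⟫) = ‖⟪y, x⟫‖ ^ 2 := by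
  rw [← inner_conj_symm (𝕜 := ℂ) x y, RCLike.mul_conj, ← RCLike.ofReal_pow, RCLike.ofReal_re]

theorem stmt5_aux {H : Type*} [NormedAddCommGroup H] [InnerProductSpace ℂ H] [CompleteSpace H]
    (ξ : ℕ → H) (A : ℝ) (hA : 0 < A)
    (hdense : Dense {f : H | Summable fun n => ‖⟪ξ n, f⟫‖ ^ 2})
    (domT : Set H) (T : H → H)
    (hT1 : ∀ f ∈ domT, (Summable fun n => ‖⟪ξ n, f⟫‖ ^ 2) ∧
      ∀ g : H, (Summable fun n => ‖⟪ξ n, g⟫‖ ^ 2) →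
        HasSum (fun n => ⟪ξ n, f⟫ * ⟪g, ξ n⟫) ⟪g, T f⟫)
    (hT2 : ∀ f : H, (Summable fun n => ‖⟪ξ n, f⟫‖ ^ 2) → ∀ h : H,
      (∀ g : H, (Summable fun n => ‖⟪ξ n, g⟫‖ ^ 2) →
        HasSum (fun n => ⟪ξ n, f⟫ * ⟪g, ξ n⟫) ⟪g, h⟫) → f ∈ domT ∧ T f = h) :
    (∀ f : H, (Summable fun n => ‖⟪ξ n, f⟫‖ ^ 2) → A * ‖f‖ ^ 2 ≤ ∑' n, ‖⟪ξ n, f⟫‖ ^ 2)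
    ↔ ∃ Tinv : H →L[ℂ] H, (∀ f ∈ domT, Tinv (T f) = f) ∧
        (∀ h : H, Tinv h ∈ domT ∧ T (Tinv h) = h) ∧ ‖Tinv‖ ≤ A⁻¹ := by
  constructor
  · intro hlow
    have surj : ∀ h : H, ∃ u : H, u ∈ domT ∧ T u = h := by
      intro h
      obtain ⟨u, hu1, hu2⟩ := exists_preimage ξ A hA hlow h
      obtain ⟨hmemu, hTu⟩ := hT2 u hu1 h hu2
      exact ⟨u, hmemu, hTu⟩
    have hpos : ∀ f ∈ domT, HasSum (fun n => ‖⟪ξ n, f⟫‖ ^ 2) (re ⟪f, T f⟫) := by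
      intro f hf
      obtain ⟨hs, hall⟩ := hT1 f hf
      have h2 := (hall f hs).mapL (reCLM (K := ℂ))
      simp only [reCLM_apply] at h2
      have h3 : (fun n => re (⟪ξ n, f⟫ * ⟪f, ξ n⟫)) = fun n => ‖⟪ξ n, f⟫‖ ^ 2 := by
        funext n; exact re_mul_conj_inner f (ξ n)
      rwa [h3] at h2
    have huniq : ∀ u ∈ domT, ∀ u' ∈ domT, T u = T u' → u = u' := by
      intro u hu u' hu' hTeq
      obtain ⟨hsu, hallu⟩ := hT1 u hu
      obtain ⟨hsu', hallu'⟩ := hT1 u' hu'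
      have hd : u - u' ∈ domSub ξ :=
        Submodule.sub_mem _ (show u ∈ domSub ξ from hsu) (show u' ∈ domSub ξ from hsu')
      have hdS : Summable fun n => ‖⟪ξ n, u - u'⟫‖ ^ 2 := hd
      have h1 := hallu (u - u') hdS
      have h2 := hallu' (u - u') hdS
      rw [hTeq] at h1
      have h3 := h1.sub h2
      rw [sub_self] at h3
      have h4 : (fun n => ⟪ξ n, u⟫ * ⟪u - u', ξ n⟫ - ⟪ξ n, u'⟫ * ⟪u - u', ξ n⟫)
          = fun n => ⟪ξ n, u - u'⟫ * ⟪u - u', ξ n⟫ := by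
        funext n; rw [inner_sub_right]; ring
      rw [h4] at h3
      have h5 := h3.mapL (reCLM (K := ℂ))
      simp only [reCLM_apply, map_zero] at h5
      have h6 : (fun n => re (⟪ξ n, u - u'⟫ * ⟪u - u', ξ n⟫))
          = fun n => ‖⟪ξ n, u - u'⟫‖ ^ 2 := by
        funext n; exact re_mul_conj_inner (u - u') (ξ n)
      rw [h6] at h5
      have h7 := hlow (u - u') hdS
      rw [h5.tsum_eq] at h7
      have h8 : ‖u - u'‖ ^ 2 = 0 := le_antisymm (by nlinarith [sq_nonneg ‖u - u'‖]) (sq_nonneg _)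
      have h9 : ‖u - u'‖ = 0 := pow_eq_zero_iff (n := 2) (by norm_num) |>.mp h8
      exact sub_eq_zero.mp (norm_eq_zero.mp h9)
    choose s hs1 hs2 using surj
    have hadd : ∀ h1 h2 : H, s (h1 + h2) = s h1 + s h2 := by
      intro h1 h2
      obtain ⟨hs1a, hall1⟩ := hT1 (s h1) (hs1 h1)
      obtain ⟨hs2a, hall2⟩ := hT1 (s h2) (hs1 h2)
      have hsum : s h1 + s h2 ∈ domSub ξ :=
        Submodule.add_mem _ (show s h1 ∈ domSub ξ from hs1a) (show s h2 ∈ domSub ξ from hs2a)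
      have hmemT : (s h1 + s h2) ∈ domT ∧ T (s h1 + s h2) = h1 + h2 := by
        apply hT2 _ hsum
        intro g hg
        have ha := hall1 g hg
        have hb := hall2 g hg
        rw [hs2] at ha hb
        have hfun : (fun n => ⟪ξ n, s h1 + s h2⟫ * ⟪g, ξ n⟫)
            = fun n => ⟪ξ n, s h1⟫ * ⟪g, ξ n⟫ + ⟪ξ n, s h2⟫ * ⟪g, ξ n⟫ := by
          funext n; rw [inner_add_right]; ring
        rw [hfun, inner_add_right]
        exact ha.add hb
      exact huniq _ (hs1 _) _ hmemT.1 ((hs2 _).trans hmemT.2.symm)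
    have hsmul : ∀ (c : ℂ) (h : H), s (c • h) = c • s h := by
      intro c h
      obtain ⟨hsa, hall⟩ := hT1 (s h) (hs1 h)
      have hsum : c • s h ∈ domSub ξ :=
        Submodule.smul_mem _ c (show s h ∈ domSub ξ from hsa)
      have hmemT : (c • s h) ∈ domT ∧ T (c • s h) = c • h := by
        apply hT2 _ hsum
        intro g hg
        have ha := hall g hg
        rw [hs2] at ha
        have hfun : (fun n => ⟪ξ n, c • s h⟫ * ⟪g, ξ n⟫)
            = fun n => c * (⟪ξ n, s h⟫ * ⟪g, ξ n⟫) := by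
          funext n; rw [inner_smul_right]; ring
        rw [hfun, inner_smul_right]
        exact ha.mul_left c
      exact huniq _ (hs1 _) _ hmemT.1 ((hs2 _).trans hmemT.2.symm)
    have hbound : ∀ h : H, ‖s h‖ ≤ A⁻¹ * ‖h‖ := by
      intro h
      have hp := hpos (s h) (hs1 h)
      rw [hs2] at hp
      have h1 := hlow (s h) (hT1 (s h) (hs1 h)).1
      rw [hp.tsum_eq] at h1
      have h2 : re ⟪s h, h⟫ ≤ ‖s h‖ * ‖h‖ := by
        calc re ⟪s h, h⟫ ≤ ‖(⟪s h, h⟫ : ℂ)‖ := Complex.re_le_norm _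
          _ ≤ ‖s h‖ * ‖h‖ := norm_inner_le_norm _ _
      rcases eq_or_lt_of_le (norm_nonneg (s h)) with h0 | h0
      · rw [← h0]; positivity
      · have h3 : A * ‖s h‖ ≤ ‖h‖ := by
          refine le_of_mul_le_mul_right ?_ h0
          nlinarith
        calc ‖s h‖ = A⁻¹ * (A * ‖s h‖) := by field_simp
          _ ≤ A⁻¹ * ‖h‖ := mul_le_mul_of_nonneg_left h3 (by positivity)
    refine ⟨LinearMap.mkContinuous
      { toFun := s, map_add' := hadd,
        map_smul' := fun c h => by rw [RingHom.id_apply]; exact hsmul c h }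
      A⁻¹ hbound, ?_, ?_, ?_⟩
    · intro f hf
      exact huniq _ (hs1 _) _ hf (hs2 _)
    · intro h
      exact ⟨hs1 h, hs2 h⟩
    · exact LinearMap.mkContinuous_norm_le _ (by positivity) _
  · rintro ⟨Tinv, hinv1, hinv2, hnorm⟩ f hf
    obtain ⟨humem, hTu⟩ := hinv2 f
    set u := Tinv f with hu
    obtain ⟨hsu, hall⟩ := hT1 u humem
    have h1 := hall f hf
    rw [hTu] at h1
    have h2 := hall u hsu
    rw [hTu] at h2
    have h2r := h2.mapL (reCLM (K := ℂ))
    simp only [reCLM_apply] at h2r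
    have h2fun : (fun n => re (⟪ξ n, u⟫ * ⟪u, ξ n⟫)) = fun n => ‖⟪ξ n, u⟫‖ ^ 2 := by
      funext n; exact re_mul_conj_inner u (ξ n)
    rw [h2fun] at h2r
    have hP : re ⟪u, f⟫ ≤ A⁻¹ * ‖f‖ ^ 2 := by
      have ha : re ⟪u, f⟫ ≤ ‖u‖ * ‖f‖ := by
        calc re ⟪u, f⟫ ≤ ‖(⟪u, f⟫ : ℂ)‖ := Complex.re_le_norm _
          _ ≤ ‖u‖ * ‖f‖ := norm_inner_le_norm _ _
      have hb : ‖u‖ ≤ A⁻¹ * ‖f‖ := by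
        calc ‖u‖ ≤ ‖Tinv‖ * ‖f‖ := Tinv.le_opNorm f
          _ ≤ A⁻¹ * ‖f‖ := by gcongr
      nlinarith [norm_nonneg f, norm_nonneg u]
    have hss : Real.sqrt A * Real.sqrt A⁻¹ = 1 := by
      rw [Real.sqrt_inv]
      exact mul_inv_cancel₀ (by positivity)
    have hterm : ∀ n, ‖⟪ξ n, u⟫ * ⟪f, ξ n⟫‖
        ≤ (A * ‖⟪ξ n, u⟫‖ ^ 2 + A⁻¹ * ‖⟪ξ n, f⟫‖ ^ 2) / 2 := by
      intro n
      rw [norm_mul]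
      have he : ‖⟪f, ξ n⟫‖ = ‖⟪ξ n, f⟫‖ := norm_inner_symm f (ξ n)
      rw [he]
      have key : (A * ‖⟪ξ n, u⟫‖ - ‖⟪ξ n, f⟫‖) ^ 2 / A
          = A * ‖⟪ξ n, u⟫‖ ^ 2 - 2 * (‖⟪ξ n, u⟫‖ * ‖⟪ξ n, f⟫‖) + A⁻¹ * ‖⟪ξ n, f⟫‖ ^ 2 := by
        field_simp
        ring
      have h0 : 0 ≤ (A * ‖⟪ξ n, u⟫‖ - ‖⟪ξ n, f⟫‖) ^ 2 / A := div_nonneg (sq_nonneg _) hA.le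
      rw [key] at h0
      linarith
    have hbsum : Summable fun n => (A * ‖⟪ξ n, u⟫‖ ^ 2 + A⁻¹ * ‖⟪ξ n, f⟫‖ ^ 2) / 2 :=
      ((h2r.summable.mul_left A).add (hf.mul_left A⁻¹)).div_const 2
    have htsum : Summable fun n => ‖⟪ξ n, u⟫ * ⟪f, ξ n⟫‖ :=
      Summable.of_nonneg_of_le (fun n => norm_nonneg _) hterm hbsum
    have hff : ‖f‖ ^ 2 ≤ ∑' n, ‖⟪ξ n, u⟫ * ⟪f, ξ n⟫‖ := by
      have e2 : ‖f‖ ^ 2 = re (⟪f, f⟫ : ℂ) := (inner_self_eq_norm_sq f).symm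
      rw [e2, ← h1.tsum_eq]
      calc re (∑' n, ⟪ξ n, u⟫ * ⟪f, ξ n⟫) ≤ ‖∑' n, ⟪ξ n, u⟫ * ⟪f, ξ n⟫‖ :=
            Complex.re_le_norm _
        _ ≤ ∑' n, ‖⟪ξ n, u⟫ * ⟪f, ξ n⟫‖ := norm_tsum_le_tsum_norm htsum
    have hS := Summable.tsum_le_tsum hterm htsum hbsum
    have hcomp : ∑' n, (A * ‖⟪ξ n, u⟫‖ ^ 2 + A⁻¹ * ‖⟪ξ n, f⟫‖ ^ 2) / 2
        = (A * re ⟪u, f⟫ + A⁻¹ * ∑' n, ‖⟪ξ n, f⟫‖ ^ 2) / 2 := by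
      rw [tsum_div_const, Summable.tsum_add (h2r.summable.mul_left A) (hf.mul_left A⁻¹),
        tsum_mul_left, tsum_mul_left, h2r.tsum_eq]
    rw [hcomp] at hS
    have hfinal := le_trans hff hS
    have hSpos : (0:ℝ) ≤ ∑' n, ‖⟪ξ n, f⟫‖ ^ 2 := tsum_nonneg fun n => sq_nonneg _
    have step1 : A * re ⟪u, f⟫ ≤ ‖f‖ ^ 2 := by
      calc A * re ⟪u, f⟫ ≤ A * (A⁻¹ * ‖f‖ ^ 2) := mul_le_mul_of_nonneg_left hP hA.le
        _ = ‖f‖ ^ 2 := by field_simp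
    have step2 : ‖f‖ ^ 2 ≤ A⁻¹ * ∑' n, ‖⟪ξ n, f⟫‖ ^ 2 := by linarith
    calc A * ‖f‖ ^ 2 ≤ A * (A⁻¹ * ∑' n, ‖⟪ξ n, f⟫‖ ^ 2) :=
          mul_le_mul_of_nonneg_left step2 hA.le
      _ = ∑' n, ‖⟪ξ n, f⟫‖ ^ 2 := by field_simp

end Aux

/-- Let `ξ` have dense domain and `T_ξ = C_ξ*C_ξ` be the associated operator. Then `ξ` is a
lower semi-frame with bound `A > 0` (i.e. `A‖f‖² ≤ Σₙ|⟨f,ξₙ⟩|²` for all `f ∈ H`, the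
inequality being trivial off `dom(ξ)`) if and only if `0 ∈ ρ(T_ξ)` and `‖T_ξ⁻¹‖ ≤ A⁻¹`. -/
theorem stmt5 {H : Type*} [NormedAddCommGroup H] [InnerProductSpace ℂ H] [CompleteSpace H]
    (ξ : ℕ → H) (A : ℝ) (hA : 0 < A)
    (hdense : Dense {f : H | Summable fun n => ‖⟪ξ n, f⟫‖ ^ 2})
    (domT : Set H) (T : H → H)
    (hT1 : ∀ f ∈ domT, (Summable fun n => ‖⟪ξ n, f⟫‖ ^ 2) ∧
      ∀ g : H, (Summable fun n => ‖⟪ξ n, g⟫‖ ^ 2) →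
        HasSum (fun n => ⟪ξ n, f⟫ * ⟪g, ξ n⟫) ⟪g, T f⟫)
    (hT2 : ∀ f : H, (Summable fun n => ‖⟪ξ n, f⟫‖ ^ 2) → ∀ h : H,
      (∀ g : H, (Summable fun n => ‖⟪ξ n, g⟫‖ ^ 2) →
        HasSum (fun n => ⟪ξ n, f⟫ * ⟪g, ξ n⟫) ⟪g, h⟫) → f ∈ domT ∧ T f = h) :
    (∀ f : H, (Summable fun n => ‖⟪ξ n, f⟫‖ ^ 2) → A * ‖f‖ ^ 2 ≤ ∑' n, ‖⟪ξ n, f⟫‖ ^ 2)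
    ↔ ∃ Tinv : H →L[ℂ] H, (∀ f ∈ domT, Tinv (T f) = f) ∧
        (∀ h : H, Tinv h ∈ domT ∧ T (Tinv h) = h) ∧ ‖Tinv‖ ≤ A⁻¹ := by
  exact stmt5_aux ξ A hA hdense domT T hT1 hT2
end

section
/- Let ξ be a sequence with dom(ξ) dense in H. Then ξ is a Bessel sequence if and only if the operator T_ξ = C_ξ*C_ξ is everywhere defined (dom(T_ξ) = H), and in that case T_ξ is bounded. -/
local notation "⟪" x ", " y "⟫" => @inner ℂ _ _ x y

open scoped ComplexConjugate

/-- Cauchy–Schwarz for infinite sums of nonnegative reals. -/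
lemma tsum_mul_le_sqrt_mul_sqrt_aux (a b : ℕ → ℝ) (ha : ∀ n, 0 ≤ a n) (hb : ∀ n, 0 ≤ b n)
    (ha2 : Summable fun n => a n ^ 2) (hb2 : Summable fun n => b n ^ 2)
    (hab : Summable fun n => a n * b n) :
    ∑' n, a n * b n ≤ Real.sqrt (∑' n, a n ^ 2) * Real.sqrt (∑' n, b n ^ 2) := by
  refine Summable.tsum_le_of_sum_le hab fun s => ?_
  refine (Real.sum_mul_le_sqrt_mul_sqrt s a b).trans ?_
  have h1 : ∑ i ∈ s, a i ^ 2 ≤ ∑' n, a n ^ 2 :=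
    Summable.sum_le_tsum s (fun n _ => sq_nonneg _) ha2
  have h2 : ∑ i ∈ s, b i ^ 2 ≤ ∑' n, b n ^ 2 :=
    Summable.sum_le_tsum s (fun n _ => sq_nonneg _) hb2
  exact mul_le_mul (Real.sqrt_le_sqrt h1) (Real.sqrt_le_sqrt h2) (Real.sqrt_nonneg _)
    (Real.sqrt_nonneg _)

/-- Let `ξ` have dense domain and `T_ξ = C_ξ*C_ξ` be the associated operator. Then `ξ` is a
Bessel sequence if and only if `dom(T_ξ) = H`, and in that case `T_ξ` is bounded. -/
theorem stmt6 {H : Type*} [NormedAddCommGroup H] [InnerProductSpace ℂ H] [CompleteSpace H]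
    (ξ : ℕ → H)
    (hdense : Dense {f : H | Summable fun n => ‖⟪ξ n, f⟫‖ ^ 2})
    (domT : Set H) (T : H → H)
    (hT1 : ∀ f ∈ domT, (Summable fun n => ‖⟪ξ n, f⟫‖ ^ 2) ∧
      ∀ g : H, (Summable fun n => ‖⟪ξ n, g⟫‖ ^ 2) →
        HasSum (fun n => ⟪ξ n, f⟫ * ⟪g, ξ n⟫) ⟪g, T f⟫)
    (hT2 : ∀ f : H, (Summable fun n => ‖⟪ξ n, f⟫‖ ^ 2) → ∀ h : H,
      (∀ g : H, (Summable fun n => ‖⟪ξ n, g⟫‖ ^ 2) →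
        HasSum (fun n => ⟪ξ n, f⟫ * ⟪g, ξ n⟫) ⟪g, h⟫) → f ∈ domT ∧ T f = h) :
    ((∃ B > (0 : ℝ), ∀ f : H, (Summable fun n => ‖⟪ξ n, f⟫‖ ^ 2) ∧
        ∑' n, ‖⟪ξ n, f⟫‖ ^ 2 ≤ B * ‖f‖ ^ 2) ↔ domT = Set.univ)
    ∧ (domT = Set.univ → ∃ C : ℝ, ∀ f : H, ‖T f‖ ≤ C * ‖f‖) := by
  -- Key fact: if `domT = univ` then `T` is a bounded (linear) operator.
  have key : domT = Set.univ → ∃ C : ℝ, 0 < C ∧ ∀ f : H, ‖T f‖ ≤ C * ‖f‖ := by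
    intro hdom
    have hAll : ∀ f : H, Summable fun n => ‖⟪ξ n, f⟫‖ ^ 2 := fun f =>
      (hT1 f (hdom ▸ Set.mem_univ f)).1
    have hHS : ∀ f g : H, HasSum (fun n => ⟪ξ n, f⟫ * ⟪g, ξ n⟫) ⟪g, T f⟫ := fun f g =>
      (hT1 f (hdom ▸ Set.mem_univ f)).2 g (hAll g)
    -- `T` is linear
    have hadd : ∀ f₁ f₂ : H, T (f₁ + f₂) = T f₁ + T f₂ := by
      intro f₁ f₂
      refine (hT2 (f₁ + f₂) (hAll _) (T f₁ + T f₂) ?_).2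
      intro g hg
      have := (hHS f₁ g).add (hHS f₂ g)
      rw [← inner_add_right] at this
      convert this using 2 with n
      rw [inner_add_right, add_mul]
    have hsmul : ∀ (c : ℂ) (f : H), T (c • f) = c • T f := by
      intro c f
      refine (hT2 (c • f) (hAll _) (c • T f) ?_).2
      intro g hg
      have := (hHS f g).mul_left c
      rw [← inner_smul_right] at this
      convert this using 2 with n
      · rfl
      rw [inner_smul_right]; ring
    set L : H →ₗ[ℂ] H :=
      { toFun := T
        map_add' := hadd
        map_smul' := hsmul } with hL
    have hsym : L.IsSymmetric := by
      intro x y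
      have h1 : HasSum (fun n => ⟪ξ n, y⟫ * ⟪x, ξ n⟫) ⟪x, T y⟫ := hHS y x
      have h2 : HasSum (fun n => star (⟪ξ n, x⟫ * ⟪y, ξ n⟫)) (star ⟪y, T x⟫) := (hHS x y).star
      have h2' : HasSum (fun n => ⟪ξ n, y⟫ * ⟪x, ξ n⟫) ⟪T x, y⟫ := by
        have heq : (fun n => star (⟪ξ n, x⟫ * ⟪y, ξ n⟫)) = fun n => ⟪ξ n, y⟫ * ⟪x, ξ n⟫ := by
          funext n
          simp only [star_mul', RCLike.star_def, inner_conj_symm]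
          ring
        have hst : (star ⟪y, T x⟫ : ℂ) = ⟪T x, y⟫ := by
          rw [RCLike.star_def, inner_conj_symm]
        rw [heq, hst] at h2
        exact h2
      exact (h2'.unique h1)
    have hcont : Continuous L := hsym.continuous
    obtain ⟨C, hC, hbound⟩ := SemilinearMapClass.bound_of_continuous L hcont
    exact ⟨C, hC, hbound⟩
  -- The sum of squares equals `re ⟪f, T f⟫` when everything is defined.
  have hsum_eq : ∀ f : H, (Summable fun n => ‖⟪ξ n, f⟫‖ ^ 2) →
      (∀ g : H, (Summable fun n => ‖⟪ξ n, g⟫‖ ^ 2) →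
        HasSum (fun n => ⟪ξ n, f⟫ * ⟪g, ξ n⟫) ⟪g, T f⟫) →
      HasSum (fun n => ‖⟪ξ n, f⟫‖ ^ 2) (Complex.re ⟪f, T f⟫) := by
    intro f hf hHSf
    have h := hHSf f hf
    have heq : (fun n => ⟪ξ n, f⟫ * ⟪f, ξ n⟫) = fun n => ((‖⟪ξ n, f⟫‖ ^ 2 : ℝ) : ℂ) := by
      funext n
      rw [← inner_conj_symm f (ξ n), RCLike.mul_conj]
      norm_cast
    rw [heq] at h
    have h2 := h.mapL Complex.reCLM
    simp only [Complex.reCLM_apply, Complex.ofReal_re, Function.comp] at h2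
    exact h2
  constructor
  · constructor
    · -- Bessel ⇒ domT = univ
      rintro ⟨B, hB0, hB⟩
      rw [Set.eq_univ_iff_forall]
      intro f
      have hf : Summable fun n => ‖⟪ξ n, f⟫‖ ^ 2 := (hB f).1
      -- summability of products
      have hprod : ∀ g : H, Summable fun n => ⟪f, ξ n⟫ * ⟪ξ n, g⟫ := by
        intro g
        refine Summable.of_norm_bounded
          ((hf.add (hB g).1).div_const 2) ?_
        intro n
        rw [norm_mul]
        have h1 : ‖⟪f, ξ n⟫‖ = ‖⟪ξ n, f⟫‖ := norm_inner_symm _ _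
        rw [h1]
        nlinarith [sq_nonneg (‖⟪ξ n, f⟫‖ - ‖⟪ξ n, g⟫‖), norm_nonneg (⟪ξ n, f⟫),
          norm_nonneg (⟪ξ n, g⟫)]
      -- norms of products are summable
      have hprodn : ∀ g : H, Summable fun n => ‖⟪ξ n, f⟫‖ * ‖⟪ξ n, g⟫‖ := by
        intro g
        refine Summable.of_nonneg_of_le
          (fun n => mul_nonneg (norm_nonneg _) (norm_nonneg _))
          (fun n => ?_) ((hf.add (hB g).1).div_const 2)
        nlinarith [sq_nonneg (‖⟪ξ n, f⟫‖ - ‖⟪ξ n, g⟫‖)]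
      -- the continuous linear functional g ↦ ∑' ⟪f, ξ n⟫ ⟪ξ n, g⟫
      set A : ℝ := ∑' n, ‖⟪ξ n, f⟫‖ ^ 2 with hA
      have φbound : ∀ g : H, ‖∑' n, ⟪f, ξ n⟫ * ⟪ξ n, g⟫‖ ≤
          Real.sqrt A * Real.sqrt B * ‖g‖ := by
        intro g
        have h1 : ‖∑' n, ⟪f, ξ n⟫ * ⟪ξ n, g⟫‖ ≤ ∑' n, ‖⟪ξ n, f⟫‖ * ‖⟪ξ n, g⟫‖ := by
          have := norm_tsum_le_tsum_norm (f := fun n => ⟪f, ξ n⟫ * ⟪ξ n, g⟫) ?_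
          · refine this.trans (le_of_eq (tsum_congr fun n => ?_))
            rw [norm_mul, norm_inner_symm f (ξ n)]
          · refine (hprodn g).congr fun n => ?_
            rw [norm_mul, norm_inner_symm f (ξ n)]
        have h2 : ∑' n, ‖⟪ξ n, f⟫‖ * ‖⟪ξ n, g⟫‖ ≤
            Real.sqrt A * Real.sqrt (∑' n, ‖⟪ξ n, g⟫‖ ^ 2) :=
          tsum_mul_le_sqrt_mul_sqrt_aux _ _ (fun n => norm_nonneg _) (fun n => norm_nonneg _)
            hf (hB g).1 (hprodn g)
        have h3 : Real.sqrt (∑' n, ‖⟪ξ n, g⟫‖ ^ 2) ≤ Real.sqrt B * ‖g‖ := by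
          have := Real.sqrt_le_sqrt (hB g).2
          rw [Real.sqrt_mul (le_of_lt hB0), Real.sqrt_sq (norm_nonneg g)] at this
          exact this
        calc ‖∑' n, ⟪f, ξ n⟫ * ⟪ξ n, g⟫‖ ≤ ∑' n, ‖⟪ξ n, f⟫‖ * ‖⟪ξ n, g⟫‖ := h1
          _ ≤ Real.sqrt A * Real.sqrt (∑' n, ‖⟪ξ n, g⟫‖ ^ 2) := h2
          _ ≤ Real.sqrt A * (Real.sqrt B * ‖g‖) :=
              mul_le_mul_of_nonneg_left h3 (Real.sqrt_nonneg _)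
          _ = Real.sqrt A * Real.sqrt B * ‖g‖ := by ring
      set φ : H →ₗ[ℂ] ℂ :=
        { toFun := fun g => ∑' n, ⟪f, ξ n⟫ * ⟪ξ n, g⟫
          map_add' := by
            intro g₁ g₂
            simp only [inner_add_right, mul_add]
            exact Summable.tsum_add (hprod g₁) (hprod g₂)
          map_smul' := by
            intro c g
            simp only [inner_smul_right, RingHom.id_apply, smul_eq_mul]
            rw [← tsum_mul_left]
            congr 1; funext n; ring } with hφ
      set φc : H →L[ℂ] ℂ := φ.mkContinuous (Real.sqrt A * Real.sqrt B) φbound with hφc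
      set h : H := (InnerProductSpace.toDual ℂ H).symm φc with hh
      refine (hT2 f hf h ?_).1
      intro g hg
      have hhg : ⟪h, g⟫ = ∑' n, ⟪f, ξ n⟫ * ⟪ξ n, g⟫ := by
        rw [hh, InnerProductSpace.toDual_symm_apply]
        rfl
      have hHSfg : HasSum (fun n => ⟪f, ξ n⟫ * ⟪ξ n, g⟫) ⟪h, g⟫ := by
        rw [hhg]; exact (hprod g).hasSum
      have := hHSfg.star
      have heq : (fun n => star (⟪f, ξ n⟫ * ⟪ξ n, g⟫)) = fun n => ⟪ξ n, f⟫ * ⟪g, ξ n⟫ := by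
        funext n
        simp only [star_mul', RCLike.star_def, inner_conj_symm]
      have hst : (star ⟪h, g⟫ : ℂ) = ⟪g, h⟫ := by rw [RCLike.star_def, inner_conj_symm]
      rw [heq, hst] at this
      exact this
    · -- domT = univ ⇒ Bessel
      intro hdom
      obtain ⟨C, hC0, hC⟩ := key hdom
      refine ⟨C, hC0, fun f => ?_⟩
      have hf : Summable fun n => ‖⟪ξ n, f⟫‖ ^ 2 := (hT1 f (hdom ▸ Set.mem_univ f)).1
      have hHSf := (hT1 f (hdom ▸ Set.mem_univ f)).2
      have hs := hsum_eq f hf hHSf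
      refine ⟨hf, ?_⟩
      rw [hs.tsum_eq]
      calc Complex.re ⟪f, T f⟫ ≤ ‖⟪f, T f⟫‖ := Complex.re_le_norm _
        _ ≤ ‖f‖ * ‖T f‖ := norm_inner_le_norm _ _
        _ ≤ ‖f‖ * (C * ‖f‖) := mul_le_mul_of_nonneg_left (hC f) (norm_nonneg f)
        _ = C * ‖f‖ ^ 2 := by ring
  · intro hdom
    obtain ⟨C, _, hC⟩ := key hdom
    exact ⟨C, hC⟩
end

section
/- Let ξ be a lower semi-frame with dom(ξ) dense and T_ξ = C_ξ*C_ξ, so that 0 ∈ ρ(T_ξ). Then the sequence {T_ξ⁻¹ ξₙ} is a Bessel sequence, with bound ‖ |C_ξ|⁻¹ ‖². -/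
local notation "⟪" x ", " y "⟫" => @inner ℂ _ _ x y

/-- Let `ξ` be a lower semi-frame with dense domain and `T_ξ = C_ξ*C_ξ = |C_ξ|²` its
associated operator, which is boundedly invertible with inverse `T_ξ⁻¹`. Then `{T_ξ⁻¹ξₙ}`
is a Bessel sequence with bound `‖|C_ξ|⁻¹‖² = ‖T_ξ⁻¹‖`. -/
theorem stmt7 {H : Type*} [NormedAddCommGroup H] [InnerProductSpace ℂ H] [CompleteSpace H]
    (ξ : ℕ → H)
    (hdense : Dense {f : H | Summable fun n => ‖⟪ξ n, f⟫‖ ^ 2})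
    (hlow : ∃ A > (0 : ℝ), ∀ f : H, (Summable fun n => ‖⟪ξ n, f⟫‖ ^ 2) →
      A * ‖f‖ ^ 2 ≤ ∑' n, ‖⟪ξ n, f⟫‖ ^ 2)
    (domT : Set H) (T : H → H)
    (hT1 : ∀ f ∈ domT, (Summable fun n => ‖⟪ξ n, f⟫‖ ^ 2) ∧
      ∀ g : H, (Summable fun n => ‖⟪ξ n, g⟫‖ ^ 2) →
        HasSum (fun n => ⟪ξ n, f⟫ * ⟪g, ξ n⟫) ⟪g, T f⟫)
    (hT2 : ∀ f : H, (Summable fun n => ‖⟪ξ n, f⟫‖ ^ 2) → ∀ h : H,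
      (∀ g : H, (Summable fun n => ‖⟪ξ n, g⟫‖ ^ 2) →
        HasSum (fun n => ⟪ξ n, f⟫ * ⟪g, ξ n⟫) ⟪g, h⟫) → f ∈ domT ∧ T f = h)
    (Tinv : H →L[ℂ] H) (hTinv1 : ∀ f ∈ domT, Tinv (T f) = f)
    (hTinv2 : ∀ h : H, Tinv h ∈ domT ∧ T (Tinv h) = h) :
    ∀ f : H, (Summable fun n => ‖⟪Tinv (ξ n), f⟫‖ ^ 2) ∧
      ∑' n, ‖⟪Tinv (ξ n), f⟫‖ ^ 2 ≤ ‖Tinv‖ * ‖f‖ ^ 2 := by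
  -- T is symmetric on its domain
  have sym : ∀ a ∈ domT, ∀ b ∈ domT, ⟪b, T a⟫ = ⟪T b, a⟫ := by
    intro a ha b hb
    have h1 := (hT1 a ha).2 b (hT1 b hb).1
    have h2 := ((hT1 b hb).2 a (hT1 a ha).1).star
    have h2' : HasSum (fun n => ⟪ξ n, a⟫ * ⟪b, ξ n⟫) ⟪T b, a⟫ := by
      convert h2 using 2 with n
      · simp [star_mul, mul_comm, Complex.star_def, inner_conj_symm]
      · simp [Complex.star_def, inner_conj_symm]
    exact h1.unique h2'
  -- Tinv is self-adjoint
  have hsa : ∀ x y : H, ⟪Tinv x, y⟫ = ⟪x, Tinv y⟫ := by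
    intro x y
    have := sym (Tinv y) (hTinv2 y).1 (Tinv x) (hTinv2 x).1
    rwa [(hTinv2 y).2, (hTinv2 x).2] at this
  intro f
  set g := Tinv f with hgdef
  have hg : g ∈ domT := (hTinv2 f).1
  have hTg : T g = f := (hTinv2 f).2
  have hkey : ∀ n, ⟪Tinv (ξ n), f⟫ = ⟪ξ n, g⟫ := fun n => hsa (ξ n) f
  have hsummable : Summable fun n => ‖⟪Tinv (ξ n), f⟫‖ ^ 2 := by
    simp_rw [hkey]; exact (hT1 g hg).1
  refine ⟨hsummable, ?_⟩
  have hs := (hT1 g hg).2 g (hT1 g hg).1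
  rw [hTg] at hs
  have hs' : HasSum (fun n => ((‖⟪ξ n, g⟫‖ ^ 2 : ℝ) : ℂ)) ⟪g, f⟫ := by
    convert hs using 2 with n
    rw [← inner_conj_symm g (ξ n), Complex.mul_conj']
    push_cast
    ring
  have hre := hs'.mapL Complex.reCLM
  simp only [Complex.reCLM_apply, Complex.ofReal_re] at hre
  have htsum : ∑' n, ‖⟪Tinv (ξ n), f⟫‖ ^ 2 = (⟪g, f⟫ : ℂ).re := by
    simp_rw [hkey]; exact hre.tsum_eq
  rw [htsum]
  calc (⟪g, f⟫ : ℂ).re ≤ ‖(⟪g, f⟫ : ℂ)‖ := Complex.re_le_norm _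
    _ ≤ ‖g‖ * ‖f‖ := norm_inner_le_norm g f
    _ ≤ (‖Tinv‖ * ‖f‖) * ‖f‖ := by
        have := Tinv.le_opNorm f
        exact mul_le_mul_of_nonneg_right this (norm_nonneg f)
    _ = ‖Tinv‖ * ‖f‖ ^ 2 := by ring
end

section
/- Let ξ be a lower semi-frame with dom(ξ) dense and T_ξ = C_ξ*C_ξ. Then for every g ∈ dom(ξ), the reconstruction formula g = Σₙ ⟨g, ξₙ⟩ T_ξ⁻¹ ξₙ holds with convergence in norm. -/
local notation "⟪" x ", " y "⟫" => @inner ℂ _ _ x y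

set_option maxHeartbeats 1000000 in
/-- Let `ξ` be a lower semi-frame with dense domain and `T_ξ = C_ξ*C_ξ` its associated
operator, boundedly invertible with inverse `T_ξ⁻¹`. Then for every `g ∈ dom(ξ)` the
reconstruction formula `g = Σₙ ⟨g,ξₙ⟩ T_ξ⁻¹ξₙ` holds with convergence in norm. -/
theorem stmt8 {H : Type*} [NormedAddCommGroup H] [InnerProductSpace ℂ H] [CompleteSpace H]
    (ξ : ℕ → H)
    (hdense : Dense {f : H | Summable fun n => ‖⟪ξ n, f⟫‖ ^ 2})
    (hlow : ∃ A > (0 : ℝ), ∀ f : H, (Summable fun n => ‖⟪ξ n, f⟫‖ ^ 2) →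
      A * ‖f‖ ^ 2 ≤ ∑' n, ‖⟪ξ n, f⟫‖ ^ 2)
    (domT : Set H) (T : H → H)
    (hT1 : ∀ f ∈ domT, (Summable fun n => ‖⟪ξ n, f⟫‖ ^ 2) ∧
      ∀ g : H, (Summable fun n => ‖⟪ξ n, g⟫‖ ^ 2) →
        HasSum (fun n => ⟪ξ n, f⟫ * ⟪g, ξ n⟫) ⟪g, T f⟫)
    (hT2 : ∀ f : H, (Summable fun n => ‖⟪ξ n, f⟫‖ ^ 2) → ∀ h : H,
      (∀ g : H, (Summable fun n => ‖⟪ξ n, g⟫‖ ^ 2) →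
        HasSum (fun n => ⟪ξ n, f⟫ * ⟪g, ξ n⟫) ⟪g, h⟫) → f ∈ domT ∧ T f = h)
    (Tinv : H →L[ℂ] H) (hTinv1 : ∀ f ∈ domT, Tinv (T f) = f)
    (hTinv2 : ∀ h : H, Tinv h ∈ domT ∧ T (Tinv h) = h) :
    ∀ g : H, (Summable fun n => ‖⟪ξ n, g⟫‖ ^ 2) →
      HasSum (fun n => ⟪ξ n, g⟫ • Tinv (ξ n)) g := by
  intro g hg
  set c : ℕ → ℂ := fun n => ⟪ξ n, g⟫ with hc
  set η : ℕ → H := fun n => Tinv (ξ n) with hη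
  -- summability of coefficients for Tinv h
  have hSumTinv : ∀ h : H, Summable fun n => ‖⟪ξ n, Tinv h⟫‖ ^ 2 :=
    fun h => (hT1 _ (hTinv2 h).1).1
  -- symmetry of Tinv
  have sym : ∀ a b : H, ⟪Tinv a, b⟫ = ⟪a, Tinv b⟫ := by
    intro a b
    have h1 := (hT1 _ (hTinv2 b).1).2 (Tinv a) (hSumTinv a)
    rw [(hTinv2 b).2] at h1
    -- h1 : HasSum (fun n => ⟪ξ n, Tinv b⟫ * ⟪Tinv a, ξ n⟫) ⟪Tinv a, b⟫
    have h2 := (hT1 _ (hTinv2 a).1).2 (Tinv b) (hSumTinv b)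
    rw [(hTinv2 a).2] at h2
    -- h2 : HasSum (fun n => ⟪ξ n, Tinv a⟫ * ⟪Tinv b, ξ n⟫) ⟪Tinv b, a⟫
    have h3 := h2.map (starRingEnd ℂ) (Complex.continuous_conj)
    simp only [Function.comp_def, map_mul, inner_conj_symm] at h3
    exact h1.unique (by simpa [mul_comm] using h3)
  -- Bessel bound for {Tinv ξ n}
  have hBessel : ∀ v : H, (∑' n, ‖⟪ξ n, Tinv v⟫‖ ^ 2) ≤ ‖Tinv‖ * ‖v‖ ^ 2 := by
    intro v
    have h1 := (hT1 _ (hTinv2 v).1).2 (Tinv v) (hSumTinv v)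
    rw [(hTinv2 v).2] at h1
    -- h1 : HasSum (fun n => ⟪ξ n, Tinv v⟫ * ⟪Tinv v, ξ n⟫) ⟪Tinv v, v⟫
    have h2 : HasSum (fun n => (‖⟪ξ n, Tinv v⟫‖ ^ 2 : ℂ)) ⟪Tinv v, v⟫ := by
      convert h1 using 2 with n
      rw [← inner_conj_symm (Tinv v) (ξ n), Complex.mul_conj']
    have h3 : HasSum (fun n => ‖⟪ξ n, Tinv v⟫‖ ^ 2) (⟪Tinv v, v⟫ : ℂ).re := by
      simpa [← Complex.ofReal_pow] using Complex.hasSum_re h2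
    rw [h3.tsum_eq]
    calc (⟪Tinv v, v⟫ : ℂ).re ≤ ‖(⟪Tinv v, v⟫ : ℂ)‖ := Complex.re_le_norm _
      _ ≤ ‖Tinv v‖ * ‖v‖ := norm_inner_le_norm _ _
      _ ≤ (‖Tinv‖ * ‖v‖) * ‖v‖ := by
          gcongr
          exact Tinv.le_opNorm v
      _ = ‖Tinv‖ * ‖v‖ ^ 2 := by ring
  -- partial sum norm bound
  have hbound : ∀ t : Finset ℕ, ‖∑ n ∈ t, c n • η n‖ ≤
      Real.sqrt (∑ n ∈ t, ‖c n‖ ^ 2) * Real.sqrt ‖Tinv‖ := by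
    intro t
    set v : H := ∑ n ∈ t, c n • η n with hv
    have key : ‖v‖ ^ 2 ≤ (Real.sqrt (∑ n ∈ t, ‖c n‖ ^ 2) * Real.sqrt ‖Tinv‖) * ‖v‖ := by
      have e1 : (⟪v, v⟫ : ℂ) = ∑ n ∈ t, c n * ⟪v, η n⟫ := by
        rw [hv, inner_sum]
        simp only [inner_smul_right]
      have e2 : ‖v‖ ^ 2 = (⟪v, v⟫ : ℂ).re := by
        rw [← inner_self_eq_norm_sq (𝕜 := ℂ) v]; rfl
      rw [e2]
      calc (⟪v, v⟫ : ℂ).re ≤ ‖(⟪v, v⟫ : ℂ)‖ := Complex.re_le_norm _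
        _ = ‖∑ n ∈ t, c n * ⟪v, η n⟫‖ := by rw [e1]
        _ ≤ ∑ n ∈ t, ‖c n * ⟪v, η n⟫‖ := norm_sum_le _ _
        _ = ∑ n ∈ t, ‖c n‖ * ‖⟪v, η n⟫‖ := by simp [norm_mul]
        _ ≤ Real.sqrt (∑ n ∈ t, ‖c n‖ ^ 2) * Real.sqrt (∑ n ∈ t, ‖⟪v, η n⟫‖ ^ 2) :=
            Real.sum_mul_le_sqrt_mul_sqrt _ _ _
        _ ≤ Real.sqrt (∑ n ∈ t, ‖c n‖ ^ 2) * Real.sqrt (‖Tinv‖ * ‖v‖ ^ 2) := by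
            gcongr
            have heq : ∀ n, ‖⟪v, η n⟫‖ = ‖⟪ξ n, Tinv v⟫‖ := by
              intro n
              rw [hη]
              rw [show (⟪v, Tinv (ξ n)⟫ : ℂ) = ⟪Tinv v, ξ n⟫ from (sym v (ξ n)).symm]
              exact norm_inner_symm _ _
            calc ∑ n ∈ t, ‖⟪v, η n⟫‖ ^ 2 = ∑ n ∈ t, ‖⟪ξ n, Tinv v⟫‖ ^ 2 := by
                  simp_rw [heq]
              _ ≤ ∑' n, ‖⟪ξ n, Tinv v⟫‖ ^ 2 := by
                  apply Summable.sum_le_tsum _ (fun n _ => by positivity) (hSumTinv v)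
              _ ≤ ‖Tinv‖ * ‖v‖ ^ 2 := hBessel v
        _ = (Real.sqrt (∑ n ∈ t, ‖c n‖ ^ 2) * Real.sqrt ‖Tinv‖) * ‖v‖ := by
            rw [Real.sqrt_mul (norm_nonneg _), Real.sqrt_sq (norm_nonneg _)]
            ring
    rcases eq_or_lt_of_le (norm_nonneg v) with h0 | h0
    · rw [← h0]; positivity
    · exact le_of_mul_le_mul_right (by nlinarith [key]) h0
  -- summability of the reconstruction series
  have hsummable : Summable (fun n => c n • η n) := by
    rw [summable_iff_vanishing_norm]
    intro ε hε
    have hδ : (0:ℝ) < ε ^ 2 / (‖Tinv‖ + 1) := by positivity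
    obtain ⟨s, hs⟩ := summable_iff_vanishing_norm.1 hg _ hδ
    refine ⟨s, fun t ht => ?_⟩
    have h1 : ∑ n ∈ t, ‖c n‖ ^ 2 < ε ^ 2 / (‖Tinv‖ + 1) :=
      (le_abs_self _).trans_lt (by simpa [Real.norm_eq_abs] using hs t ht)
    have h2 : (∑ n ∈ t, ‖c n‖ ^ 2) * (‖Tinv‖ + 1) < ε ^ 2 :=
      (lt_div_iff₀ (by positivity : (0:ℝ) < ‖Tinv‖ + 1)).1 h1
    have hsnn : (0:ℝ) ≤ ∑ n ∈ t, ‖c n‖ ^ 2 := by positivity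
    have hB : (0:ℝ) ≤ ‖Tinv‖ := norm_nonneg _
    calc ‖∑ n ∈ t, c n • η n‖
        ≤ Real.sqrt (∑ n ∈ t, ‖c n‖ ^ 2) * Real.sqrt ‖Tinv‖ := hbound t
      _ = Real.sqrt ((∑ n ∈ t, ‖c n‖ ^ 2) * ‖Tinv‖) := (Real.sqrt_mul hsnn _).symm
      _ < ε := by
          rw [show ε = Real.sqrt (ε ^ 2) from (Real.sqrt_sq hε.le).symm]
          exact Real.sqrt_lt_sqrt (by positivity) (by nlinarith)
  obtain ⟨s, hs⟩ := hsummable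
  -- weak identification of the limit on the dense domain
  have hmem : ∀ h : H, (Summable fun n => ‖⟪ξ n, h⟫‖ ^ 2) → (⟪h, s⟫ : ℂ) = ⟪h, g⟫ := by
    intro h hh
    have h1 : HasSum (fun n => (⟪h, c n • η n⟫ : ℂ)) ⟪h, s⟫ := (innerSL ℂ h).hasSum hs
    have h2 := (hT1 _ (hTinv2 h).1).2 g hg
    rw [(hTinv2 h).2] at h2
    have h3 := h2.map (starRingEnd ℂ) Complex.continuous_conj
    simp only [Function.comp_def, map_mul, inner_conj_symm] at h3
    -- h3 : HasSum (fun n => ⟪Tinv h, ξ n⟫ * ⟪ξ n, g⟫) ⟪h, g⟫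
    refine h1.unique ?_
    convert h3 using 2 with n
    rw [inner_smul_right, hη, ← sym h (ξ n), mul_comm]
  -- conclude s = g by density
  have hall : ∀ h : H, (⟪h, s⟫ : ℂ) = ⟪h, g⟫ := by
    have hclosed : IsClosed {h : H | (⟪h, s⟫ : ℂ) = ⟪h, g⟫} :=
      isClosed_eq (Continuous.inner continuous_id continuous_const)
        (Continuous.inner continuous_id continuous_const)
    intro h'
    have hmem' : h' ∈ closure {h : H | Summable fun n => ‖⟪ξ n, h⟫‖ ^ 2} := by
      rw [hdense.closure_eq]; trivial
    exact (hclosed.closure_subset_iff.2 (fun h hh => hmem h hh)) hmem'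
  have hsg : s = g := by
    have h0 := hall (s - g)
    have hz : (⟪s - g, s - g⟫ : ℂ) = 0 := by rw [inner_sub_right, h0, sub_self]
    exact sub_eq_zero.1 (inner_self_eq_zero.1 hz)
  rw [hsg] at hs
  exact hs
end

section
/- A sequence ξ in H is a lower semi-frame if and only if there exists an inner product ⟨·,·⟩₊ on dom(ξ) making dom(ξ) a Hilbert space with α‖f‖ ≤ ‖f‖₊ for some α > 0, such that ξ is a frame for dom(ξ) with respect to ‖·‖₊, i.e. A‖f‖₊² ≤ Σₙ |⟨f,ξₙ⟩|² ≤ B‖f‖₊² for all f ∈ dom(ξ) and some A,B > 0. -/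
open Filter

local notation "⟪" x ", " y "⟫" => @inner ℂ _ _ x y

private lemma sq_norm_mul_summable {a b : ℕ → ℂ} (ha : Summable fun n => ‖a n‖ ^ 2)
    (hb : Summable fun n => ‖b n‖ ^ 2) :
    Summable fun n => (starRingEnd ℂ) (a n) * b n := by
  apply Summable.of_norm
  apply Summable.of_nonneg_of_le (fun n => norm_nonneg _)
    (fun n => ?_) ((ha.add hb).div_const 2)
  have h2 := two_mul_le_add_sq ‖a n‖ ‖b n‖
  have : ‖(starRingEnd ℂ) (a n) * b n‖ = ‖a n‖ * ‖b n‖ := by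
    rw [norm_mul, RCLike.norm_conj]
  rw [this]
  linarith

private lemma sq_norm_sub_summable {H : Type*} [NormedAddCommGroup H] [InnerProductSpace ℂ H]
    {ξ : ℕ → H} {f g : H} (hf : Summable fun n => ‖⟪ξ n, f⟫‖ ^ 2)
    (hg : Summable fun n => ‖⟪ξ n, g⟫‖ ^ 2) :
    Summable fun n => ‖⟪ξ n, f - g⟫‖ ^ 2 := by
  apply Summable.of_nonneg_of_le (fun n => by positivity) (fun n => ?_)
    (((hf.mul_left 2).add (hg.mul_left 2)))
  have h1 : ‖⟪ξ n, f - g⟫‖ ≤ ‖⟪ξ n, f⟫‖ + ‖⟪ξ n, g⟫‖ := by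
    rw [inner_sub_right]; exact norm_sub_le _ _
  nlinarith [norm_nonneg (⟪ξ n, f⟫), norm_nonneg (⟪ξ n, g⟫), norm_nonneg (⟪ξ n, f - g⟫),
    sq_nonneg (‖⟪ξ n, f⟫‖ - ‖⟪ξ n, g⟫‖)]

/-- A sequence `ξ` is a lower semi-frame if and only if there is an inner product `⟨·,·⟩₊`
on `dom(ξ)` turning it into a Hilbert space with `α‖f‖ ≤ ‖f‖₊` for some `α > 0`, and such
that `ξ` is a frame for `(dom(ξ), ‖·‖₊)`:
`A‖f‖₊² ≤ Σₙ |⟨f,ξₙ⟩|² ≤ B‖f‖₊²` for all `f ∈ dom(ξ)`. -/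
theorem stmt9 {H : Type*} [NormedAddCommGroup H] [InnerProductSpace ℂ H] [CompleteSpace H]
    (ξ : ℕ → H) :
    (∃ A > (0 : ℝ), ∀ f : H, (Summable fun n => ‖⟪ξ n, f⟫‖ ^ 2) →
        A * ‖f‖ ^ 2 ≤ ∑' n, ‖⟪ξ n, f⟫‖ ^ 2)
    ↔
    ∃ (ip : H → H → ℂ) (α A B : ℝ), 0 < α ∧ 0 < A ∧ 0 < B ∧
      -- conjugate symmetry on dom(ξ)
      (∀ f g : H, (Summable fun n => ‖⟪ξ n, f⟫‖ ^ 2) → (Summable fun n => ‖⟪ξ n, g⟫‖ ^ 2) →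
        ip g f = (starRingEnd ℂ) (ip f g)) ∧
      -- linearity in the second argument on dom(ξ)
      (∀ f g h : H, (Summable fun n => ‖⟪ξ n, f⟫‖ ^ 2) → (Summable fun n => ‖⟪ξ n, g⟫‖ ^ 2) →
        (Summable fun n => ‖⟪ξ n, h⟫‖ ^ 2) → ip f (g + h) = ip f g + ip f h) ∧
      (∀ (c : ℂ) (f g : H), (Summable fun n => ‖⟪ξ n, f⟫‖ ^ 2) →
        (Summable fun n => ‖⟪ξ n, g⟫‖ ^ 2) → ip f (c • g) = c * ip f g) ∧
      -- positivity and comparison with the norm of H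
      (∀ f : H, (Summable fun n => ‖⟪ξ n, f⟫‖ ^ 2) → 0 ≤ (ip f f).re) ∧
      (∀ f : H, (Summable fun n => ‖⟪ξ n, f⟫‖ ^ 2) → (α * ‖f‖) ^ 2 ≤ (ip f f).re) ∧
      -- completeness of dom(ξ) for the norm ‖f‖₊ = √(ip f f).re
      (∀ F : ℕ → H, (∀ k, Summable fun n => ‖⟪ξ n, F k⟫‖ ^ 2) →
        (∀ ε > (0 : ℝ), ∃ N, ∀ j ≥ N, ∀ k ≥ N, (ip (F j - F k) (F j - F k)).re < ε) →
        ∃ f : H, (Summable fun n => ‖⟪ξ n, f⟫‖ ^ 2) ∧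
          Tendsto (fun k => (ip (F k - f) (F k - f)).re) atTop (nhds 0)) ∧
      -- frame inequalities with respect to ‖·‖₊
      (∀ f : H, (Summable fun n => ‖⟪ξ n, f⟫‖ ^ 2) →
        A * (ip f f).re ≤ ∑' n, ‖⟪ξ n, f⟫‖ ^ 2 ∧
        ∑' n, ‖⟪ξ n, f⟫‖ ^ 2 ≤ B * (ip f f).re) := by
  constructor
  · rintro ⟨A₀, hA₀, hlow⟩
    set ip : H → H → ℂ := fun f g => ∑' n, (starRingEnd ℂ) ⟪ξ n, f⟫ * ⟪ξ n, g⟫ with hip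
    have key : ∀ f : H, ip f f = ((∑' n, ‖⟪ξ n, f⟫‖ ^ 2 : ℝ) : ℂ) := by
      intro f
      rw [hip]
      simp only
      rw [Complex.ofReal_tsum]
      congr 1; funext n
      rw [mul_comm, Complex.mul_conj']
      push_cast; ring
    have keyre : ∀ f : H, (ip f f).re = ∑' n, ‖⟪ξ n, f⟫‖ ^ 2 := by
      intro f; rw [key f, Complex.ofReal_re]
    refine ⟨ip, Real.sqrt A₀, 1, 1, Real.sqrt_pos.2 hA₀, one_pos, one_pos, ?_, ?_, ?_, ?_, ?_, ?_, ?_⟩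
    · intro f g _ _
      rw [hip]; simp only
      rw [starRingEnd_apply, tsum_star]
      congr 1; funext n
      simp only [star_mul', starRingEnd_apply, star_star]
      ring
    · intro f g h hf hg hh
      rw [hip]; simp only
      rw [← Summable.tsum_add (sq_norm_mul_summable hf hg) (sq_norm_mul_summable hf hh)]
      congr 1; funext n
      rw [inner_add_right]; ring
    · intro c f g _ _
      rw [hip]; simp only
      rw [← tsum_mul_left]
      congr 1; funext n
      rw [inner_smul_right]; ring
    · intro f hf
      rw [keyre]
      exact tsum_nonneg fun n => by positivity
    · intro f hf
      rw [keyre, mul_pow, Real.sq_sqrt hA₀.le]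
      exact hlow f hf
    · -- completeness
      intro F hFdom hcau
      -- F is Cauchy in H
      have hsubdom : ∀ j k, Summable fun n => ‖⟪ξ n, F j - F k⟫‖ ^ 2 := fun j k =>
        sq_norm_sub_summable (hFdom j) (hFdom k)
      have hcauH : CauchySeq F := by
        rw [Metric.cauchySeq_iff]
        intro ε hε
        obtain ⟨N, hN⟩ := hcau (A₀ * ε ^ 2) (by positivity)
        refine ⟨N, fun j hj k hk => ?_⟩
        have h1 : A₀ * ‖F j - F k‖ ^ 2 ≤ (ip (F j - F k) (F j - F k)).re := by
          rw [keyre]; exact hlow _ (hsubdom j k)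
        have h2 := hN j hj k hk
        have h3 : ‖F j - F k‖ ^ 2 < ε ^ 2 := by
          nlinarith
        rw [dist_eq_norm]
        nlinarith [norm_nonneg (F j - F k)]
      obtain ⟨f, hf⟩ := cauchySeq_tendsto_of_complete hcauH
      -- main estimate
      have main : ∀ ε > (0:ℝ), ∃ N, ∀ j ≥ N,
          (Summable fun n => ‖⟪ξ n, F j - f⟫‖ ^ 2) ∧ ∑' n, ‖⟪ξ n, F j - f⟫‖ ^ 2 ≤ ε := by
        intro ε hε
        obtain ⟨N, hN⟩ := hcau ε hε
        refine ⟨N, fun j hj => ?_⟩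
        have hfin : ∀ m : ℕ, ∑ i ∈ Finset.range m, ‖⟪ξ i, F j - f⟫‖ ^ 2 ≤ ε := by
          intro m
          have htend : Filter.Tendsto (fun k => ∑ i ∈ Finset.range m, ‖⟪ξ i, F j - F k⟫‖ ^ 2)
              atTop (nhds (∑ i ∈ Finset.range m, ‖⟪ξ i, F j - f⟫‖ ^ 2)) := by
            apply tendsto_finset_sum
            intro i _
            have : Filter.Tendsto (fun k => ⟪ξ i, F j - F k⟫) atTop (nhds ⟪ξ i, F j - f⟫) := by
              apply Filter.Tendsto.inner tendsto_const_nhds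
              exact Filter.Tendsto.sub tendsto_const_nhds hf
            exact (this.norm.pow 2)
          apply le_of_tendsto htend
          filter_upwards [Filter.eventually_ge_atTop N] with k hk
          calc ∑ i ∈ Finset.range m, ‖⟪ξ i, F j - F k⟫‖ ^ 2
              ≤ ∑' n, ‖⟪ξ n, F j - F k⟫‖ ^ 2 :=
                Summable.sum_le_tsum _ (fun i _ => by positivity) (hsubdom j k)
            _ = (ip (F j - F k) (F j - F k)).re := (keyre _).symm
            _ ≤ ε := (hN j hj k hk).le
        have hsum : Summable fun n => ‖⟪ξ n, F j - f⟫‖ ^ 2 :=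
          summable_of_sum_range_le (fun n => by positivity) hfin
        exact ⟨hsum, Summable.tsum_le_of_sum_range_le hsum hfin⟩
      obtain ⟨N₀, hN₀⟩ := main 1 one_pos
      have hfdom : Summable fun n => ‖⟪ξ n, f⟫‖ ^ 2 := by
        have h1 := (hN₀ N₀ le_rfl).1
        have h2 := sq_norm_sub_summable (hFdom N₀) h1
        simpa [sub_sub_cancel] using h2
      refine ⟨f, hfdom, ?_⟩
      rw [Metric.tendsto_atTop]
      intro ε hε
      obtain ⟨N, hN⟩ := main (ε / 2) (by positivity)
      refine ⟨N, fun k hk => ?_⟩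
      obtain ⟨hs, hle⟩ := hN k hk
      rw [Real.dist_eq, keyre]
      have hnn : (0:ℝ) ≤ ∑' n, ‖⟪ξ n, F k - f⟫‖ ^ 2 := tsum_nonneg fun n => by positivity
      rw [abs_of_nonneg (by linarith)]
      linarith
    · intro f hf
      rw [keyre]
      constructor <;> simp
  · rintro ⟨ip, α, A, B, hα, hA, hB, _, _, _, _, hlow, _, hframe⟩
    refine ⟨A * α ^ 2, by positivity, fun f hf => ?_⟩
    have h1 := hlow f hf
    have h2 := (hframe f hf).1
    have : A * (α * ‖f‖) ^ 2 ≤ A * (ip f f).re := by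
      apply mul_le_mul_of_nonneg_left h1 hA.le
    calc A * α ^ 2 * ‖f‖ ^ 2 = A * (α * ‖f‖) ^ 2 := by ring
      _ ≤ A * (ip f f).re := this
      _ ≤ ∑' n, ‖⟪ξ n, f⟫‖ ^ 2 := h2
end

section
/- Let W be a closed subspace of ℓ² with finite-dimensional orthogonal complement, and let {aₙ} be a complex sequence such that Σₙ aₙ bₙ converges for every {bₙ} ∈ W. Then {aₙ} ∈ ℓ². -/
open Filter Finset
open scoped ComplexConjugate Topology ENNReal

local notation "⟪" x ", " y "⟫" => @inner ℂ _ _ x y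

/-- Let `W` be a closed subspace of `ℓ²` with finite-dimensional orthogonal complement, and
let `{aₙ}` be a complex sequence such that `Σₙ aₙbₙ` converges for every `{bₙ} ∈ W`.
Then `{aₙ} ∈ ℓ²`. -/
theorem stmt11 (W : Submodule ℂ (lp (fun _ : ℕ => ℂ) 2))
    (hWclosed : IsClosed (W : Set (lp (fun _ : ℕ => ℂ) 2)))
    (hfin : FiniteDimensional ℂ ↥Wᗮ)
    (a : ℕ → ℂ)
    (ha : ∀ b ∈ W, Summable fun n => a n * b n) :
    Memℓp a 2 := by
  classical
  set E := lp (fun _ : ℕ => ℂ) 2 with hEdef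
  haveI : CompleteSpace W := hWclosed.completeSpace_coe
  have hcoord : ∀ (x : E) (n : ℕ), ‖x n‖ ≤ ‖x‖ := fun x n =>
    lp.norm_apply_le_norm two_ne_zero x n
  -- partial sum functionals on W
  let φseq : ℕ → W →L[ℂ] ℂ := fun N =>
    LinearMap.mkContinuous
      { toFun := fun x => ∑ n ∈ Finset.range N, a n * (x : E) n
        map_add' := by
          intro x y
          simp [mul_add, Finset.sum_add_distrib]
        map_smul' := by
          intro cz x
          simp only [Submodule.coe_smul, lp.coeFn_smul, Pi.smul_apply, smul_eq_mul,
            RingHom.id_apply, Finset.mul_sum]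
          exact Finset.sum_congr rfl fun n _ => by ring }
      (∑ n ∈ Finset.range N, ‖a n‖)
      (by
        intro x
        calc ‖∑ n ∈ Finset.range N, a n * (x : E) n‖
            ≤ ∑ n ∈ Finset.range N, ‖a n * (x : E) n‖ := norm_sum_le _ _
          _ ≤ ∑ n ∈ Finset.range N, ‖a n‖ * ‖x‖ := by
              refine Finset.sum_le_sum fun n _ => ?_
              rw [norm_mul]
              exact mul_le_mul_of_nonneg_left (hcoord (x : E) n) (norm_nonneg _)
          _ = (∑ n ∈ Finset.range N, ‖a n‖) * ‖x‖ := (Finset.sum_mul _ _ _).symm)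
  have hlim : Tendsto (fun N (x : W) => φseq N x) atTop
      (𝓝 fun x : W => ∑' n, a n * (x : E) n) := by
    rw [tendsto_pi_nhds]
    intro x
    exact (ha (x : E) x.2).hasSum.tendsto_sum_nat
  let φ : W →L[ℂ] ℂ := continuousLinearMapOfTendsto φseq hlim
  have hφ : ∀ x : W, φ x = ∑' n, a n * (x : E) n := fun x => rfl
  -- Riesz representation
  let c : W := (InnerProductSpace.toDual ℂ W).symm φ
  have hc : ∀ x : W, ⟪c, x⟫ = φ x := fun x => InnerProductSpace.toDual_symm_apply
  let cE : E := (c : E)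
  have hsum_c : ∀ b ∈ W, HasSum (fun n => conj (cE n) * b n) (∑' n, a n * b n) := by
    intro b hb
    have h1 := lp.hasSum_inner (𝕜 := ℂ) cE b
    have h2 : ⟪cE, b⟫ = ∑' n, a n * b n := by
      have := hc ⟨b, hb⟩
      rw [hφ ⟨b, hb⟩] at this
      simpa [Submodule.coe_inner] using this
    rw [h2] at h1
    simpa [RCLike.inner_apply, mul_comm] using h1
  -- the difference pairs to zero against W
  set d : ℕ → ℂ := fun n => a n - conj (cE n) with hddef
  have hd : ∀ b ∈ W, HasSum (fun n => d n * b n) 0 := by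
    intro b hb
    have h1 := (ha b hb).hasSum
    have h2 := hsum_c b hb
    simpa [hddef, sub_mul, sub_self] using h1.sub h2
  -- basis of the orthogonal complement
  set k := Module.finrank ℂ ↥Wᗮ with hk
  let bB : Module.Basis (Fin k) ℂ ↥Wᗮ := Module.finBasis ℂ ↥Wᗮ
  let f : Fin k → E := fun i => ((bB i : ↥Wᗮ) : E)
  have hmemW : ∀ x : E, (∀ i, ⟪f i, x⟫ = 0) → x ∈ W := by
    intro x hx
    rw [← Submodule.orthogonal_orthogonal W, Submodule.mem_orthogonal]
    intro u hu
    have key : ∀ y : ↥Wᗮ, ⟪x, (y : E)⟫ = 0 := by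
      let L0 : ↥Wᗮ →ₗ[ℂ] ℂ := (innerSL ℂ x).toLinearMap.comp Wᗮ.subtype
      have hL0 : L0 = 0 := by
        apply bB.ext
        intro i
        have : ⟪x, f i⟫ = 0 := by
          rw [← inner_conj_symm, hx i, map_zero]
        simpa [L0, f] using this
      intro y
      have := congrArg (fun T : ↥Wᗮ →ₗ[ℂ] ℂ => T y) hL0
      simpa [L0] using this
    have := key ⟨u, hu⟩
    rw [← inner_conj_symm, this, map_zero]
  -- functionals on finitely supported sequences
  let K : (ℕ →₀ ℂ) →ₗ[ℂ] ℂ := Finsupp.linearCombination ℂ d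
  let L : Fin k → (ℕ →₀ ℂ) →ₗ[ℂ] ℂ := fun i =>
    Finsupp.linearCombination ℂ (fun n => conj (f i n))
  have hker : ⨅ i, LinearMap.ker (L i) ≤ LinearMap.ker K := by
    intro b hb
    rw [Submodule.mem_iInf] at hb
    rw [LinearMap.mem_ker]
    let x : E := ∑ n ∈ b.support, lp.single 2 n (b n)
    have hxapp : ∀ n, x n = b n := by
      intro n
      change ((∑ m ∈ b.support, lp.single 2 m (b m) :
        lp (fun _ : ℕ => ℂ) 2) : ∀ i : ℕ, ℂ) n = b n
      rw [lp.coeFn_sum, Finset.sum_apply]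
      simp only [lp.single_apply, Finset.sum_dite_eq', Finset.sum_dite_eq]
      by_cases hn : n ∈ b.support
      · simp [hn]
      · simp [hn, Finsupp.notMem_support_iff.1 hn]
    have hxW : x ∈ W := by
      apply hmemW
      intro i
      have hLi := hb i
      rw [LinearMap.mem_ker] at hLi
      have : ⟪f i, x⟫ = ∑ n ∈ b.support, conj (f i n) * b n := by
        rw [inner_sum]
        congr 1
        ext n
        rw [lp.inner_single_right]
        simp [RCLike.inner_apply, mul_comm]
      rw [this]
      have : (L i) b = ∑ n ∈ b.support, conj (f i n) * b n := by
        rw [Finsupp.linearCombination_apply, Finsupp.sum]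
        simp [mul_comm]
      rw [← this, hLi]
    have h0 : HasSum (fun n => d n * x n) 0 := hd x hxW
    have h0' : HasSum (fun n => d n * x n) (∑ n ∈ b.support, d n * b n) := by
      have : HasSum (fun n => d n * x n) (∑ n ∈ b.support, d n * x n) := by
        apply hasSum_sum_of_ne_finset_zero
        intro n hn
        rw [hxapp n, Finsupp.notMem_support_iff.1 hn, mul_zero]
      convert this using 2 with n
      rw [hxapp]
    have hzero : (∑ n ∈ b.support, d n * b n) = 0 := (h0'.unique h0)
    rw [Finsupp.linearCombination_apply, Finsupp.sum]
    simpa [mul_comm] using hzero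
  obtain ⟨lam, hlam⟩ := (Submodule.mem_span_range_iff_exists_fun ℂ).1
    (mem_span_of_iInf_ker_le_ker hker)
  have hdn : ∀ n, d n = ∑ i, lam i * conj (f i n) := by
    intro n
    have := congrArg (fun T : (ℕ →₀ ℂ) →ₗ[ℂ] ℂ => T (Finsupp.single n 1)) hlam
    simpa [K, L, Finsupp.linearCombination_single] using this.symm
  -- membership in ℓ²
  have htwo : (0 : ℝ) < (2 : ℝ≥0∞).toReal := by norm_num
  have hconj : ∀ g : E, Memℓp (fun n => conj (g n)) 2 := by
    intro g
    have := lp.memℓp g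
    rw [memℓp_gen_iff htwo] at this ⊢
    simpa using this
  have hmemsum : ∀ s : Finset (Fin k),
      Memℓp (fun n => ∑ i ∈ s, lam i * conj (f i n)) 2 := by
    intro s
    induction s using Finset.induction_on with
    | empty => simp only [Finset.sum_empty]; exact zero_mem_ℓp'
    | @insert j s hjs ih =>
        have h1 : Memℓp (fun n => lam j * conj (f j n)) 2 :=
          (hconj (f j)).const_smul (lam j)
        have h2 := h1.add ih
        convert h2 using 1
        funext n
        simp [Finset.sum_insert hjs]
  have hmem_d : Memℓp d 2 := by
    have hrw : d = fun n => ∑ i : Fin k, lam i * conj (f i n) := funext hdn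
    rw [hrw]
    exact hmemsum Finset.univ
  have haeq : a = fun n => d n + conj (cE n) := by
    funext n
    simp [hddef]
  rw [haeq]
  exact hmem_d.add (hconj cE)
end

section
/- Let ξ, η be sequences with dom(η) dense, T = C_η*C_ξ, and assume ξ, η are lower semi-frames with R(C_ξ) ∔ R(C_η)^⊥ = ℓ². Then {(T⁻¹)* ξₙ} is a Bessel sequence of H, and g = Σₙ ⟨g, ηₙ⟩ (T⁻¹)* ξₙ with norm convergence for every g ∈ dom(η). -/
local notation "⟪" x ", " y "⟫" => @inner ℂ _ _ x y

/-- Let `ξ, η` be lower semi-frames with `dom(η)` dense, `R(C_ξ) ∔ R(C_η)^⊥ = ℓ²`, and let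
`T = C_η*C_ξ` be the associated operator, with bounded inverse `T⁻¹`. Then `{(T⁻¹)*ξₙ}` is
a Bessel sequence of `H` and `g = Σₙ ⟨g,ηₙ⟩ (T⁻¹)*ξₙ` in norm for every `g ∈ dom(η)`. -/
theorem stmt13 {H : Type*} [NormedAddCommGroup H] [InnerProductSpace ℂ H] [CompleteSpace H]
    (ξ η : ℕ → H)
    (hηdense : Dense {g : H | Summable fun n => ‖⟪η n, g⟫‖ ^ 2})
    (hξlow : ∃ A > (0 : ℝ), ∀ f : H, (Summable fun n => ‖⟪ξ n, f⟫‖ ^ 2) →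
      A * ‖f‖ ^ 2 ≤ ∑' n, ‖⟪ξ n, f⟫‖ ^ 2)
    (hηlow : ∃ A > (0 : ℝ), ∀ g : H, (Summable fun n => ‖⟪η n, g⟫‖ ^ 2) →
      A * ‖g‖ ^ 2 ≤ ∑' n, ‖⟪η n, g⟫‖ ^ 2)
    (hdirect1 : ∀ c : lp (fun _ : ℕ => ℂ) 2,
      c ∈ {c : lp (fun _ : ℕ => ℂ) 2 | ∃ f : H, (Summable fun n => ‖⟪ξ n, f⟫‖ ^ 2) ∧
        ∀ n, c n = ⟪ξ n, f⟫} →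
      c ∈ {c : lp (fun _ : ℕ => ℂ) 2 | ∀ d : lp (fun _ : ℕ => ℂ) 2,
        (∃ g : H, (Summable fun n => ‖⟪η n, g⟫‖ ^ 2) ∧ ∀ n, d n = ⟪η n, g⟫) → ⟪d, c⟫ = 0} →
      c = 0)
    (hdirect2 : ∀ c : lp (fun _ : ℕ => ℂ) 2,
      ∃ u ∈ {c : lp (fun _ : ℕ => ℂ) 2 | ∃ f : H, (Summable fun n => ‖⟪ξ n, f⟫‖ ^ 2) ∧
          ∀ n, c n = ⟪ξ n, f⟫},
      ∃ v ∈ {c : lp (fun _ : ℕ => ℂ) 2 | ∀ d : lp (fun _ : ℕ => ℂ) 2,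
          (∃ g : H, (Summable fun n => ‖⟪η n, g⟫‖ ^ 2) ∧ ∀ n, d n = ⟪η n, g⟫) → ⟪d, c⟫ = 0},
        c = u + v)
    (domT : Set H) (T : H → H)
    (hT1 : ∀ f ∈ domT, (Summable fun n => ‖⟪ξ n, f⟫‖ ^ 2) ∧
      ∀ g : H, (Summable fun n => ‖⟪η n, g⟫‖ ^ 2) →
        HasSum (fun n => ⟪ξ n, f⟫ * ⟪g, η n⟫) ⟪g, T f⟫)
    (hT2 : ∀ f : H, (Summable fun n => ‖⟪ξ n, f⟫‖ ^ 2) → ∀ h : H,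
      (∀ g : H, (Summable fun n => ‖⟪η n, g⟫‖ ^ 2) →
        HasSum (fun n => ⟪ξ n, f⟫ * ⟪g, η n⟫) ⟪g, h⟫) → f ∈ domT ∧ T f = h)
    (Tinv : H →L[ℂ] H) (hTinv1 : ∀ f ∈ domT, Tinv (T f) = f)
    (hTinv2 : ∀ h : H, Tinv h ∈ domT ∧ T (Tinv h) = h) :
    (∃ B > (0 : ℝ), ∀ f : H,
      (Summable fun n => ‖⟪(ContinuousLinearMap.adjoint Tinv) (ξ n), f⟫‖ ^ 2) ∧
      ∑' n, ‖⟪(ContinuousLinearMap.adjoint Tinv) (ξ n), f⟫‖ ^ 2 ≤ B * ‖f‖ ^ 2) ∧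
    ∀ g : H, (Summable fun n => ‖⟪η n, g⟫‖ ^ 2) →
      HasSum (fun n => ⟪η n, g⟫ • (ContinuousLinearMap.adjoint Tinv) (ξ n)) g := by
  -- abbreviations
  have h2 : ((2:ENNReal)).toReal = ((2:ℕ):ℝ) := by norm_num
  have hadj : ∀ (x v : H), ⟪(ContinuousLinearMap.adjoint Tinv) x, v⟫ = ⟪x, Tinv v⟫ := fun x v =>
    ContinuousLinearMap.adjoint_inner_left Tinv v x
  have hsum : ∀ f : H, Summable fun n => ‖⟪ξ n, Tinv f⟫‖ ^ 2 := fun f =>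
    (hT1 (Tinv f) (hTinv2 f).1).1
  have hmem : ∀ f : H, Memℓp (fun n => ⟪ξ n, Tinv f⟫) 2 := by
    intro f
    apply memℓp_gen
    rw [h2]
    simpa [Real.rpow_natCast] using hsum f
  -- the linear analysis-composed map
  let S0 : H →ₗ[ℂ] lp (fun _ : ℕ => ℂ) 2 :=
    { toFun := fun f => ⟨fun n => ⟪ξ n, Tinv f⟫, hmem f⟩
      map_add' := by
        intro f g
        apply lp.ext
        funext n
        simp [inner_add_right]
        rfl
      map_smul' := by
        intro c f
        apply lp.ext
        funext n
        simp [inner_smul_right] }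
  have hS0 : ∀ (f : H) (n : ℕ), (S0 f : ℕ → ℂ) n = ⟪ξ n, Tinv f⟫ := fun f n => rfl
  have Scont : Continuous S0 := by
    apply S0.continuous_of_seq_closed_graph
    intro u x y hux huy
    apply lp.ext
    funext n
    have h1 : Filter.Tendsto (fun k => ((S0 ∘ u) k : ℕ → ℂ) n) Filter.atTop (nhds (y n)) := by
      have hev : ∀ a : lp (fun _ : ℕ => ℂ) 2, ‖(a : ℕ → ℂ) n‖ ≤ ‖a‖ := fun a =>
        lp.norm_apply_le_norm two_ne_zero a n
      rw [tendsto_iff_norm_sub_tendsto_zero]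
      have : ∀ k, ‖((S0 ∘ u) k : ℕ → ℂ) n - y n‖ ≤ ‖(S0 ∘ u) k - y‖ := by
        intro k
        simpa using hev ((S0 ∘ u) k - y)
      refine squeeze_zero (fun k => norm_nonneg _) this ?_
      rw [← tendsto_iff_norm_sub_tendsto_zero]
      exact huy
    have h2' : Filter.Tendsto (fun k => ((S0 ∘ u) k : ℕ → ℂ) n) Filter.atTop
        (nhds ⟪ξ n, Tinv x⟫) := by
      simp only [Function.comp, hS0]
      exact Filter.Tendsto.inner tendsto_const_nhds ((Tinv.continuous.tendsto x).comp hux)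
    exact tendsto_nhds_unique h1 h2'
  let Sc : H →L[ℂ] lp (fun _ : ℕ => ℂ) 2 := ⟨S0, Scont⟩
  have hSc : ∀ (f : H) (n : ℕ), (Sc f : ℕ → ℂ) n = ⟪ξ n, Tinv f⟫ := fun f n => rfl
  have hnorm : ∀ f : H, ∑' n, ‖⟪ξ n, Tinv f⟫‖ ^ 2 = ‖Sc f‖ ^ 2 := by
    intro f
    have h := lp.norm_rpow_eq_tsum (p := 2) (by rw [h2]; norm_num) (Sc f)
    rw [h2] at h
    simp only [Real.rpow_natCast] at h
    calc ∑' n, ‖⟪ξ n, Tinv f⟫‖ ^ 2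
        = ∑' n, ‖(Sc f : ℕ → ℂ) n‖ ^ (2 : ℕ) := tsum_congr fun n => by rw [hSc]
      _ = ‖Sc f‖ ^ (2 : ℕ) := h.symm
      _ = ‖Sc f‖ ^ 2 := rfl
  have hsummable : ∀ f : H,
      Summable fun n => ‖⟪(ContinuousLinearMap.adjoint Tinv) (ξ n), f⟫‖ ^ 2 := by
    intro f
    simpa only [hadj] using hsum f
  constructor
  · refine ⟨‖Sc‖ ^ 2 + 1, by positivity, fun f => ⟨hsummable f, ?_⟩⟩
    simp only [hadj]
    rw [hnorm f]
    have h1 : ‖Sc f‖ ^ 2 ≤ (‖Sc‖ * ‖f‖) ^ 2 :=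
      pow_le_pow_left₀ (norm_nonneg _) (Sc.le_opNorm f) 2
    calc ‖Sc f‖ ^ 2 ≤ (‖Sc‖ * ‖f‖) ^ 2 := h1
      _ = ‖Sc‖ ^ 2 * ‖f‖ ^ 2 := by ring
      _ ≤ (‖Sc‖ ^ 2 + 1) * ‖f‖ ^ 2 := by nlinarith [sq_nonneg ‖f‖]
  · intro g hg
    set c : ℕ → ℂ := fun n => ⟪η n, g⟫ with hc
    have cmem : Memℓp c 2 := by
      apply memℓp_gen
      rw [h2]
      simpa [Real.rpow_natCast] using hg
    set cl : lp (fun _ : ℕ => ℂ) 2 := ⟨c, cmem⟩ with hcl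
    set A := ContinuousLinearMap.adjoint Sc with hA
    have hsingle : HasSum (fun n => lp.single 2 n ((cl : ℕ → ℂ) n)) cl :=
      lp.hasSum_single ENNReal.ofNat_ne_top cl
    have hmap : HasSum (fun n => A (lp.single 2 n ((cl : ℕ → ℂ) n))) (A cl) :=
      A.hasSum hsingle
    have hterm : ∀ n, A (lp.single 2 n ((cl : ℕ → ℂ) n))
        = c n • (ContinuousLinearMap.adjoint Tinv) (ξ n) := by
      intro n
      apply ext_inner_right ℂ
      intro v
      rw [hA, ContinuousLinearMap.adjoint_inner_left, lp.inner_single_left,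
        inner_smul_left, hadj, hSc]
      exact RCLike.inner_apply' _ _
    have hAcl : A cl = g := by
      apply ext_inner_right ℂ
      intro v
      rw [hA, ContinuousLinearMap.adjoint_inner_left, lp.inner_eq_tsum]
      have hTsum : HasSum (fun n => ⟪ξ n, Tinv v⟫ * ⟪g, η n⟫) ⟪g, v⟫ := by
        have := (hT1 (Tinv v) (hTinv2 v).1).2 g hg
        rwa [(hTinv2 v).2] at this
      have : ∀ n, ⟪(cl : ℕ → ℂ) n, (Sc v : ℕ → ℂ) n⟫ = ⟪ξ n, Tinv v⟫ * ⟪g, η n⟫ := by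
        intro n
        rw [hSc, RCLike.inner_apply']
        show (starRingEnd ℂ) (c n) * ⟪ξ n, Tinv v⟫ = _
        rw [hc]
        simp only [inner_conj_symm]
        ring
      rw [tsum_congr this, hTsum.tsum_eq]
    have hmap' : HasSum (fun n => c n • (ContinuousLinearMap.adjoint Tinv) (ξ n)) (A cl) := by
      simpa only [hterm] using hmap
    have hmap'' : HasSum (fun n => ⟪η n, g⟫ • (ContinuousLinearMap.adjoint Tinv) (ξ n))
        (A cl) := hmap'
    rwa [hAcl] at hmap''
end

section
/- Let {eₙ} be an orthonormal basis of H, φₙ = V eₙ with V ∈ B(H) bounded and bijective (so φ = {φₙ} is a Riesz basis), ψₙ = (V⁻¹)* eₙ its canonical dual, and α = {αₙ} a complex sequence. Set ξ = {φₙ} and η = {αₙ ψₙ}. Then the form Ω_{ξ,η}(f,g) = Σₙ αₙ ⟨f,φₙ⟩⟨ψₙ,g⟩ on H × dom(η) is 0-closed (equivalently, the associated operator H^α f = Σₙ αₙ ⟨f,φₙ⟩ψₙ is boundedly invertible) if and only if inf_n |αₙ| > 0. -/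
local notation "⟪" x ", " y "⟫" => @inner ℂ _ _ x y

/-- Let `φₙ = Veₙ` be a Riesz basis (`V` bounded and boundedly invertible, `{eₙ}` an ONB),
`ψₙ = (V⁻¹)*eₙ` its canonical dual and `α` a complex sequence. The operator
`H^α f = Σₙ αₙ⟨f,φₙ⟩ψₙ`, defined on `{f : Σₙ |αₙ|²|⟨f,φₙ⟩|² < ∞}`, is boundedly
invertible (equivalently the form `Ω_{ξ,η}` with `ξ = {φₙ}`, `η = {αₙψₙ}` is 0-closed)
if and only if `inf_n |αₙ| > 0`. -/
theorem stmt14 {H : Type*} [NormedAddCommGroup H] [InnerProductSpace ℂ H] [CompleteSpace H]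
    (e : ℕ → H) (he : Orthonormal ℂ e)
    (hetotal : (Submodule.span ℂ (Set.range e)).topologicalClosure = ⊤)
    (V : H ≃L[ℂ] H) (α : ℕ → ℂ) (φ ψ : ℕ → H)
    (hφ : ∀ n, φ n = V (e n))
    (hψ : ∀ n, ψ n = ContinuousLinearMap.adjoint (V.symm : H →L[ℂ] H) (e n)) :
    (∃ (Hop : H → H) (Hinv : H →L[ℂ] H),
      (∀ f : H, (Summable fun n => ‖α n * ⟪φ n, f⟫‖ ^ 2) →
        HasSum (fun n => (α n * ⟪φ n, f⟫) • ψ n) (Hop f)) ∧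
      (∀ f : H, (Summable fun n => ‖α n * ⟪φ n, f⟫‖ ^ 2) → Hinv (Hop f) = f) ∧
      (∀ h : H, (Summable fun n => ‖α n * ⟪φ n, Hinv h⟫‖ ^ 2) ∧ Hop (Hinv h) = h))
    ↔ ∃ c > (0 : ℝ), ∀ n, c ≤ ‖α n‖ := by
  classical
  set A : H →L[ℂ] H := ContinuousLinearMap.adjoint (V : H →L[ℂ] H) with hA
  set W : H →L[ℂ] H := ContinuousLinearMap.adjoint (V.symm : H →L[ℂ] H) with hW
  have hAW : ∀ x, A (W x) = x := by
    intro x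
    apply ext_inner_left ℂ
    intro y
    rw [hA, ContinuousLinearMap.adjoint_inner_right, hW,
      ContinuousLinearMap.adjoint_inner_right, ContinuousLinearEquiv.coe_coe,
      ContinuousLinearEquiv.coe_coe, ContinuousLinearEquiv.symm_apply_apply]
  have hWA : ∀ x, W (A x) = x := by
    intro x
    apply ext_inner_left ℂ
    intro y
    rw [hW, ContinuousLinearMap.adjoint_inner_right, hA,
      ContinuousLinearMap.adjoint_inner_right, ContinuousLinearEquiv.coe_coe,
      ContinuousLinearEquiv.coe_coe, ContinuousLinearEquiv.apply_symm_apply]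
  have hψW : ∀ n, ψ n = W (e n) := fun n => hψ n
  have hcoefA : ∀ (f : H) (n : ℕ), ⟪φ n, f⟫ = ⟪e n, A f⟫ := by
    intro f n
    rw [hA, ContinuousLinearMap.adjoint_inner_right, hφ, ContinuousLinearEquiv.coe_coe]
  constructor
  · rintro ⟨Hop, Hinv, h1, h2, _h3⟩
    have hφψ : ∀ n m, ⟪φ n, ψ m⟫ = if n = m then (1 : ℂ) else 0 := by
      intro n m
      rw [hcoefA, hψW, hAW]
      exact orthonormal_iff_ite.mp he n m
    have hsm : ∀ m, Summable fun n => ‖α n * ⟪φ n, ψ m⟫‖ ^ 2 := by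
      intro m
      apply summable_of_ne_finset_zero (s := ({m} : Finset ℕ))
      intro n hn
      simp only [Finset.mem_singleton] at hn
      rw [hφψ, if_neg hn]
      simp
    have heq : ∀ m, α m • Hinv (ψ m) = ψ m := by
      intro m
      have hop : Hop (ψ m) = α m • ψ m := by
        have hs1 := h1 (ψ m) (hsm m)
        have hs2 : HasSum (fun n => (α n * ⟪φ n, ψ m⟫) • ψ n) (α m • ψ m) := by
          have h0 := hasSum_single (f := fun n => (α n * ⟪φ n, ψ m⟫) • ψ n) m
            (fun n hn => by simp [hφψ, hn])
          simpa [hφψ] using h0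
        exact hs1.unique hs2
      have := h2 (ψ m) (hsm m)
      rw [hop, map_smul] at this
      exact this
    have hψne : ∀ m, ψ m ≠ 0 := by
      intro m h0
      have h1' : e m = 0 := by
        have := hAW (e m)
        rw [← hψW m, h0, map_zero] at this
        exact this.symm
      have := he.1 m
      rw [h1', norm_zero] at this
      norm_num at this
    have hHinvpos : (0 : ℝ) < ‖Hinv‖ := by
      apply norm_pos_iff.mpr
      intro h0
      apply hψne 0
      rw [← heq 0, h0]
      simp
    refine ⟨‖Hinv‖⁻¹, inv_pos.mpr hHinvpos, fun m => ?_⟩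
    have hle : ‖ψ m‖ ≤ ‖α m‖ * ‖Hinv‖ * ‖ψ m‖ := by
      calc ‖ψ m‖ = ‖α m • Hinv (ψ m)‖ := by rw [heq m]
        _ = ‖α m‖ * ‖Hinv (ψ m)‖ := norm_smul _ _
        _ ≤ ‖α m‖ * (‖Hinv‖ * ‖ψ m‖) := by
            gcongr
            exact Hinv.le_opNorm (ψ m)
        _ = ‖α m‖ * ‖Hinv‖ * ‖ψ m‖ := by ring
    have hψpos : (0 : ℝ) < ‖ψ m‖ := norm_pos_iff.mpr (hψne m)
    have h1le : 1 ≤ ‖α m‖ * ‖Hinv‖ := by nlinarith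
    rw [inv_eq_one_div, div_le_iff₀ hHinvpos]
    exact h1le
  · rintro ⟨c, hc, hcα⟩
    have hα0 : ∀ n, α n ≠ 0 := by
      intro n h0
      have := hcα n
      rw [h0, norm_zero] at this
      linarith
    set b : HilbertBasis ℕ ℂ H := HilbertBasis.mk he hetotal.ge with hbdef
    have hb : ⇑b = e := HilbertBasis.coe_mk _ _
    have h2r : ∀ r : ℝ, r ^ (2 : ENNReal).toReal = r ^ 2 := by
      intro r
      norm_num [Real.rpow_two]
    have hcoef : ∀ (f : H) (n : ℕ), ⟪φ n, f⟫ = b.repr (A f) n := by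
      intro f n
      rw [b.repr_apply_apply, hb, hcoefA]
    have memf : ∀ (g : ℕ → ℂ), (Summable fun n => ‖g n‖ ^ 2) → Memℓp g 2 := by
      intro g hs
      apply memℓp_gen
      simpa [h2r] using hs
    have sumf : ∀ y : lp (fun _ : ℕ => ℂ) 2, Summable fun n => ‖y n‖ ^ 2 := by
      intro y
      have := (lp.memℓp y).summable (by norm_num : (0:ℝ) < (2 : ENNReal).toReal)
      simpa [h2r] using this
    have hpt : ∀ (y : ℕ → ℂ) (i : ℕ), ‖(α i)⁻¹ * y i‖ ^ 2 ≤ c⁻¹ ^ 2 * ‖y i‖ ^ 2 := by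
      intro y i
      rw [norm_mul, mul_pow, norm_inv]
      gcongr
      exact hcα i
    have hinv_mem : ∀ y : lp (fun _ : ℕ => ℂ) 2, Memℓp (fun n => (α n)⁻¹ * y n) 2 := by
      intro y
      apply memf
      refine Summable.of_nonneg_of_le (fun n => by positivity) (fun n => hpt y n)
        (((sumf y).mul_left (c⁻¹ ^ 2)))
    let T : lp (fun _ : ℕ => ℂ) 2 →ₗ[ℂ] lp (fun _ : ℕ => ℂ) 2 :=
      { toFun := fun y => ⟨fun n => (α n)⁻¹ * y n, hinv_mem y⟩
        map_add' := fun y z => by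
          apply lp.ext
          funext n
          show (α n)⁻¹ * (y + z) n = (α n)⁻¹ * y n + (α n)⁻¹ * z n
          rw [lp.coeFn_add, Pi.add_apply, mul_add]
        map_smul' := fun r y => by
          apply lp.ext
          funext n
          show (α n)⁻¹ * (r • y) n = r • ((α n)⁻¹ * y n)
          rw [lp.coeFn_smul, Pi.smul_apply, smul_eq_mul, smul_eq_mul]
          ring }
    have hTbound : ∀ y, ‖T y‖ ≤ c⁻¹ * ‖y‖ := by
      intro y
      apply lp.norm_le_of_forall_sum_le (by norm_num : (0:ℝ) < (2 : ENNReal).toReal)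
        (by positivity)
      intro s
      have hbd := lp.sum_rpow_le_norm_rpow (by norm_num : (0:ℝ) < (2 : ENNReal).toReal) y s
      simp only [h2r] at hbd ⊢
      calc ∑ i ∈ s, ‖(T y) i‖ ^ 2 ≤ ∑ i ∈ s, c⁻¹ ^ 2 * ‖y i‖ ^ 2 :=
            Finset.sum_le_sum fun i _ => hpt y i
        _ = c⁻¹ ^ 2 * ∑ i ∈ s, ‖y i‖ ^ 2 := by rw [Finset.mul_sum]
        _ ≤ c⁻¹ ^ 2 * ‖y‖ ^ 2 := by
            gcongr
        _ = (c⁻¹ * ‖y‖) ^ 2 := by ring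
    let Tc : lp (fun _ : ℕ => ℂ) 2 →L[ℂ] lp (fun _ : ℕ => ℂ) 2 :=
      T.mkContinuous c⁻¹ hTbound
    let R : H ≃L[ℂ] lp (fun _ : ℕ => ℂ) 2 := b.repr.toContinuousLinearEquiv
    let Hinv : H →L[ℂ] H :=
      W ∘L ((R.symm : lp (fun _ : ℕ => ℂ) 2 →L[ℂ] H) ∘L (Tc ∘L ((R : H →L[ℂ] lp (fun _ : ℕ => ℂ) 2) ∘L A)))
    have hHinv : ∀ h : H, Hinv h = W (b.repr.symm (Tc (b.repr (A h)))) := fun h => rfl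
    have hTc : ∀ (y : lp (fun _ : ℕ => ℂ) 2) (n : ℕ), (Tc y) n = (α n)⁻¹ * y n := fun y n => rfl
    refine ⟨fun f => if hs : Summable (fun n => ‖α n * ⟪φ n, f⟫‖ ^ 2) then
      W (b.repr.symm ⟨fun n => α n * ⟪φ n, f⟫, memf _ hs⟩) else 0, Hinv, ?_, ?_, ?_⟩
    · intro f hs
      beta_reduce
      rw [dif_pos hs]
      set z : lp (fun _ : ℕ => ℂ) 2 := ⟨fun n => α n * ⟪φ n, f⟫, memf _ hs⟩ with hz
      have h0 := (b.hasSum_repr_symm z).mapL W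
      have hfun : (fun n => W (z n • b n)) = fun n => (α n * ⟪φ n, f⟫) • ψ n := by
        funext n
        rw [map_smul, hb, hψW]
      rw [hfun] at h0
      exact h0
    · intro f hs
      beta_reduce
      rw [dif_pos hs, hHinv, hAW, LinearIsometryEquiv.apply_symm_apply]
      have hz : Tc (⟨fun n => α n * ⟪φ n, f⟫, memf _ hs⟩ : lp (fun _ : ℕ => ℂ) 2)
          = b.repr (A f) := by
        apply lp.ext
        funext n
        rw [hTc]
        show (α n)⁻¹ * (α n * ⟪φ n, f⟫) = b.repr (A f) n
        rw [inv_mul_cancel_left₀ (hα0 n), hcoef]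
      rw [hz, LinearIsometryEquiv.symm_apply_apply, hWA]
    · intro h
      have hkey : ∀ n, ⟪φ n, Hinv h⟫ = (α n)⁻¹ * b.repr (A h) n := by
        intro n
        rw [hcoef, hHinv, hAW, LinearIsometryEquiv.apply_symm_apply, hTc]
      have hfun2 : (fun n => ‖α n * ⟪φ n, Hinv h⟫‖ ^ 2)
          = fun n => ‖b.repr (A h) n‖ ^ 2 := by
        funext n
        rw [hkey, mul_inv_cancel_left₀ (hα0 n)]
      have hs : Summable fun n => ‖α n * ⟪φ n, Hinv h⟫‖ ^ 2 := by
        rw [hfun2]; exact sumf _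
      refine ⟨hs, ?_⟩
      beta_reduce
      rw [dif_pos hs]
      have hz : (⟨fun n => α n * ⟪φ n, Hinv h⟫, memf _ hs⟩ : lp (fun _ : ℕ => ℂ) 2)
          = b.repr (A h) := by
        apply lp.ext
        funext n
        show α n * ⟪φ n, Hinv h⟫ = b.repr (A h) n
        rw [hkey, mul_inv_cancel_left₀ (hα0 n)]
      rw [hz, LinearIsometryEquiv.symm_apply_apply, hWA]
end

section
/- With the setup of a Riesz basis φₙ = Veₙ (V ∈ B(H) bijective), its canonical dual ψₙ = (V*)⁻¹eₙ, and a complex sequence {αₙ}, the operator H^α_{ψ,φ} defined by H^α f = Σₙ αₙ ⟨f,φₙ⟩ψₙ on dom(H^α) = {f ∈ H : Σₙ |αₙ|²|⟨f,φₙ⟩|² < ∞} is densely defined and closed, and its resolvent set equals the complement of the closure of {αₙ : n ∈ ℕ} in ℂ. -/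
open Filter ENNReal

local notation "⟪" x ", " y "⟫" => @inner ℂ _ _ x y

lemma summable_sq_iff_memℓp (g : ℕ → ℂ) : (Summable fun n => ‖g n‖ ^ 2) ↔ Memℓp g 2 := by
  rw [memℓp_gen_iff (by norm_num : (0:ℝ) < (2:ℝ≥0∞).toReal)]
  have h2 : ((2:ℝ≥0∞)).toReal = ((2:ℕ):ℝ) := by norm_num
  simp_rw [h2, Real.rpow_natCast]

lemma mul_mem_l2 (c : ℕ → ℂ) (C : ℝ) (hc : ∀ n, ‖c n‖ ≤ C)
    (x : lp (fun _ : ℕ => ℂ) 2) : Memℓp (fun n => c n * x n) 2 := by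
  have hC : 0 ≤ C := le_trans (norm_nonneg _) (hc 0)
  have htp : (0:ℝ) < (2:ℝ≥0∞).toReal := by norm_num
  apply memℓp_gen
  have hx := (lp.memℓp x).summable htp
  refine Summable.of_nonneg_of_le (fun n => Real.rpow_nonneg (norm_nonneg _) _)
    (fun n => ?_) (hx.mul_left (C ^ (2:ℝ≥0∞).toReal))
  calc ‖c n * x n‖ ^ (2:ℝ≥0∞).toReal = (‖c n‖ * ‖x n‖) ^ (2:ℝ≥0∞).toReal := by
        rw [norm_mul]
    _ ≤ (C * ‖x n‖) ^ (2:ℝ≥0∞).toReal :=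
        Real.rpow_le_rpow (by positivity)
          (mul_le_mul_of_nonneg_right (hc n) (norm_nonneg _)) (le_of_lt htp)
    _ = C ^ (2:ℝ≥0∞).toReal * ‖x n‖ ^ (2:ℝ≥0∞).toReal := Real.mul_rpow hC (norm_nonneg _)

noncomputable def mulLp (c : ℕ → ℂ) (C : ℝ) (hc : ∀ n, ‖c n‖ ≤ C) :
    lp (fun _ : ℕ => ℂ) 2 →L[ℂ] lp (fun _ : ℕ => ℂ) 2 :=
  LinearMap.mkContinuous
    { toFun := fun x => ⟨fun n => c n * x n, mul_mem_l2 c C hc x⟩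
      map_add' := by intro x y; apply lp.ext; funext n; simp [mul_add]; rfl
      map_smul' := by intro a x; apply lp.ext; funext n; simp; ring } C
  (by
    intro x
    have hC : 0 ≤ C := le_trans (norm_nonneg _) (hc 0)
    have htp : (0:ℝ) < (2:ℝ≥0∞).toReal := by norm_num
    apply lp.norm_le_of_tsum_le htp (by positivity)
    have hx := (lp.memℓp x).summable htp
    have h1 : ∀ n, ‖c n * x n‖ ^ (2:ℝ≥0∞).toReal
        ≤ C ^ (2:ℝ≥0∞).toReal * ‖x n‖ ^ (2:ℝ≥0∞).toReal := by
      intro n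
      calc ‖c n * x n‖ ^ (2:ℝ≥0∞).toReal = (‖c n‖ * ‖x n‖) ^ (2:ℝ≥0∞).toReal := by rw [norm_mul]
        _ ≤ (C * ‖x n‖) ^ (2:ℝ≥0∞).toReal :=
            Real.rpow_le_rpow (by positivity)
              (mul_le_mul_of_nonneg_right (hc n) (norm_nonneg _)) (le_of_lt htp)
        _ = C ^ (2:ℝ≥0∞).toReal * ‖x n‖ ^ (2:ℝ≥0∞).toReal := Real.mul_rpow hC (norm_nonneg _)
    calc (∑' n, ‖c n * x n‖ ^ (2:ℝ≥0∞).toReal)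
        ≤ ∑' n, C ^ (2:ℝ≥0∞).toReal * ‖x n‖ ^ (2:ℝ≥0∞).toReal := by
          refine Summable.tsum_le_tsum h1 ?_ (hx.mul_left _)
          exact Summable.of_nonneg_of_le (fun n => Real.rpow_nonneg (norm_nonneg _) _) h1
            (hx.mul_left _)
      _ = C ^ (2:ℝ≥0∞).toReal * ∑' n, ‖x n‖ ^ (2:ℝ≥0∞).toReal := tsum_mul_left
      _ = C ^ (2:ℝ≥0∞).toReal * ‖x‖ ^ (2:ℝ≥0∞).toReal := by rw [lp.norm_rpow_eq_tsum htp]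
      _ = (C * ‖x‖) ^ (2:ℝ≥0∞).toReal := (Real.mul_rpow hC (norm_nonneg _)).symm)

theorem mulLp_apply (c : ℕ → ℂ) (C : ℝ) (hc : ∀ n, ‖c n‖ ≤ C)
    (x : lp (fun _ : ℕ => ℂ) 2) (n : ℕ) : mulLp c C hc x n = c n * x n := rfl

set_option maxHeartbeats 1000000 in
/-- Let `φₙ = Veₙ` be a Riesz basis (`V` bounded with bounded inverse, `{eₙ}` an ONB),
`ψₙ = (V*)⁻¹eₙ` its canonical dual and `α` a complex sequence. The operator
`H^α_{ψ,φ} f = Σₙ αₙ⟨f,φₙ⟩ψₙ` on `dom(H^α) = {f : Σₙ |αₙ|²|⟨f,φₙ⟩|² < ∞}` is densely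
defined and closed, and its resolvent set is the complement of the closure of `{αₙ}`. -/
theorem stmt15 {H : Type*} [NormedAddCommGroup H] [InnerProductSpace ℂ H] [CompleteSpace H]
    (e : ℕ → H) (he : Orthonormal ℂ e)
    (hetotal : (Submodule.span ℂ (Set.range e)).topologicalClosure = ⊤)
    (V : H ≃L[ℂ] H) (α : ℕ → ℂ) (φ ψ : ℕ → H)
    (hφ : ∀ n, φ n = V (e n))
    (hψ : ∀ n, ψ n = ContinuousLinearMap.adjoint (V.symm : H →L[ℂ] H) (e n))
    (Hop : H → H)
    (hHop : ∀ f : H, (Summable fun n => ‖α n * ⟪φ n, f⟫‖ ^ 2) →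
      HasSum (fun n => (α n * ⟪φ n, f⟫) • ψ n) (Hop f)) :
    -- densely defined
    Dense {f : H | Summable fun n => ‖α n * ⟪φ n, f⟫‖ ^ 2} ∧
    -- closed
    (∀ (F : ℕ → H) (f h : H), (∀ k, Summable fun n => ‖α n * ⟪φ n, F k⟫‖ ^ 2) →
      Tendsto F atTop (nhds f) → Tendsto (fun k => Hop (F k)) atTop (nhds h) →
      (Summable fun n => ‖α n * ⟪φ n, f⟫‖ ^ 2) ∧ Hop f = h) ∧
    -- resolvent set = complement of the closure of {αₙ}
    (∀ lam : ℂ, lam ∉ closure (Set.range α) ↔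
      ∃ Rlam : H →L[ℂ] H,
        (∀ f : H, (Summable fun n => ‖α n * ⟪φ n, f⟫‖ ^ 2) → Rlam (Hop f - lam • f) = f) ∧
        (∀ h : H, (Summable fun n => ‖α n * ⟪φ n, Rlam h⟫‖ ^ 2) ∧
          Hop (Rlam h) - lam • Rlam h = h)) := by
  set A : H →L[ℂ] H := ContinuousLinearMap.adjoint (V : H →L[ℂ] H) with hA
  set B : H →L[ℂ] H := ContinuousLinearMap.adjoint (V.symm : H →L[ℂ] H) with hB
  have hBA : ∀ x, B (A x) = x := by
    intro x
    apply ext_inner_left ℂ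
    intro v
    rw [hB, ContinuousLinearMap.adjoint_inner_right, hA, ContinuousLinearMap.adjoint_inner_right]
    simp
  have hAB : ∀ x, A (B x) = x := by
    intro x
    apply ext_inner_left ℂ
    intro v
    rw [hA, ContinuousLinearMap.adjoint_inner_right, hB, ContinuousLinearMap.adjoint_inner_right]
    simp
  let b : HilbertBasis ℕ ℂ H := HilbertBasis.mk he (le_of_eq hetotal.symm)
  have hb : ⇑b = e := HilbertBasis.coe_mk _ _
  have hco : ∀ (f : H) (n : ℕ), b.repr (A f) n = ⟪φ n, f⟫ := by
    intro f n
    rw [HilbertBasis.repr_apply_apply, hb, hA, ContinuousLinearMap.adjoint_inner_right, hφ]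
    rfl
  let T : lp (fun _ : ℕ => ℂ) 2 →L[ℂ] H :=
    B ∘L (b.repr.symm.toContinuousLinearEquiv : lp (fun _ : ℕ => ℂ) 2 ≃L[ℂ] H)
  have hT : ∀ w, T w = B (b.repr.symm w) := fun _ => rfl
  let S : H →L[ℂ] lp (fun _ : ℕ => ℂ) 2 :=
    (b.repr.toContinuousLinearEquiv : H ≃L[ℂ] lp (fun _ : ℕ => ℂ) 2) ∘L A
  have hS : ∀ x, S x = b.repr (A x) := fun _ => rfl
  have hST : ∀ w, S (T w) = w := by
    intro w; rw [hS, hT, hAB]; simp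
  have hTS : ∀ x, T (S x) = x := by
    intro x; rw [hS, hT]; simp [hBA]
  have hcoS : ∀ (f : H) (n : ℕ), S f n = ⟪φ n, f⟫ := by
    intro f n; rw [hS, hco]
  have hcoT : ∀ (w : lp (fun _ : ℕ => ℂ) 2) (n : ℕ), ⟪φ n, T w⟫ = w n := by
    intro w n
    rw [← hcoS, hST]
  have hhasT : ∀ w : lp (fun _ : ℕ => ℂ) 2, HasSum (fun n => w n • ψ n) (T w) := by
    intro w
    have h1 := (b.hasSum_repr_symm w).mapL B
    rw [← hT] at h1
    convert h1 using 2 with n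
    rw [hψ, hb]
    simp [← hB]
  have hHopT : ∀ (f : H) (hf : Summable fun n => ‖α n * ⟪φ n, f⟫‖ ^ 2),
      Hop f = T ⟨fun n => α n * ⟪φ n, f⟫,
        (summable_sq_iff_memℓp _).mp hf⟩ := by
    intro f hf
    exact (hHop f hf).unique (hhasT _)
  -- Part 1: dense domain
  have hdense : Dense {f : H | Summable fun n => ‖α n * ⟪φ n, f⟫‖ ^ 2} := by
    have hsub : (⇑B '' (Submodule.span ℂ (Set.range e) : Set H))
        ⊆ {f : H | Summable fun n => ‖α n * ⟪φ n, f⟫‖ ^ 2} := by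
      rintro _ ⟨x, hx, rfl⟩
      have hfin : ∃ s : Finset ℕ, ∀ n ∉ s, ⟪e n, x⟫ = 0 := by
        induction hx using Submodule.span_induction with
        | mem y hy =>
          obtain ⟨m, rfl⟩ := hy
          exact ⟨{m}, fun n hn => he.2 (by simpa using hn)⟩
        | zero => exact ⟨∅, fun n _ => inner_zero_right _⟩
        | add y z _ _ hy hz =>
          obtain ⟨s, hs⟩ := hy; obtain ⟨t, ht⟩ := hz
          exact ⟨s ∪ t, fun n hn => by
            rw [inner_add_right, hs n (fun h => hn (Finset.mem_union_left _ h)),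
              ht n (fun h => hn (Finset.mem_union_right _ h)), add_zero]⟩
        | smul a y _ hy =>
          obtain ⟨s, hs⟩ := hy
          exact ⟨s, fun n hn => by rw [inner_smul_right, hs n hn, mul_zero]⟩
      obtain ⟨s, hs⟩ := hfin
      apply summable_of_ne_finset_zero (s := s)
      intro n hn
      have h1 : ⟪φ n, B x⟫ = ⟪e n, x⟫ := by
        rw [← hco, hAB, HilbertBasis.repr_apply_apply, hb]
      rw [h1, hs n hn, mul_zero, norm_zero]
      simp
    have hd : Dense (Submodule.span ℂ (Set.range e) : Set H) :=
      Submodule.dense_iff_topologicalClosure_eq_top.mpr hetotal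
    let W : H ≃L[ℂ] H := ContinuousLinearEquiv.equivOfInverse B A hAB hBA
    have hDi : Dense (⇑B '' (Submodule.span ℂ (Set.range e) : Set H)) :=
      (W.surjective.denseRange).dense_image W.continuous hd
    exact hDi.mono hsub
  refine ⟨hdense, ?_, ?_⟩
  · -- Part 2: closed
    intro F f h hFdom hFf hFh
    have hcoord : ∀ m, α m * ⟪φ m, f⟫ = ⟪φ m, h⟫ := by
      intro m
      have h1 : Tendsto (fun k => α m * ⟪φ m, F k⟫) atTop (nhds (α m * ⟪φ m, f⟫)) :=
        (tendsto_const_nhds.inner hFf).const_mul (α m)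
      have h2 : Tendsto (fun k => ⟪φ m, Hop (F k)⟫) atTop (nhds ⟪φ m, h⟫) :=
        tendsto_const_nhds.inner hFh
      have h3 : (fun k => ⟪φ m, Hop (F k)⟫) = fun k => α m * ⟪φ m, F k⟫ := by
        funext k
        rw [hHopT (F k) (hFdom k), hcoT]
      rw [h3] at h2
      exact tendsto_nhds_unique h1 h2
    have hfun : (fun n => α n * ⟪φ n, f⟫) = fun n => S h n := by
      funext n; rw [hcoord n, hcoS]
    have hdomf : Summable fun n => ‖α n * ⟪φ n, f⟫‖ ^ 2 := by
      rw [summable_sq_iff_memℓp, hfun]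
      exact lp.memℓp (S h)
    refine ⟨hdomf, ?_⟩
    rw [hHopT f hdomf]
    have : (⟨fun n => α n * ⟪φ n, f⟫, (summable_sq_iff_memℓp _).mp hdomf⟩ :
        lp (fun _ : ℕ => ℂ) 2) = S h := by
      apply lp.ext
      exact hfun
    rw [this, hTS]
  · -- Part 3: resolvent
    intro lam
    have biorth : ∀ m n, ⟪φ m, ψ n⟫ = if m = n then (1:ℂ) else 0 := by
      intro m n
      have h1 : ψ n = B (e n) := hψ n
      rw [h1, ← hco, hAB, HilbertBasis.repr_apply_apply, hb]
      exact orthonormal_iff_ite.mp he m n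
    have hψB : ∀ n, ψ n = B (e n) := hψ
    have hψne : ∀ n, ψ n ≠ 0 := by
      intro n hn
      have h1 : A (ψ n) = e n := by rw [hψB, hAB]
      rw [hn, map_zero] at h1
      exact he.ne_zero n h1.symm
    have domψ : ∀ n, Summable fun m => ‖α m * ⟪φ m, ψ n⟫‖ ^ 2 := by
      intro n
      apply summable_of_ne_finset_zero (s := {n})
      intro m hm
      rw [biorth, if_neg (by simpa using hm), mul_zero, norm_zero]
      simp
    have hHopψ : ∀ n, Hop (ψ n) = α n • ψ n := by
      intro n
      have has := hHop (ψ n) (domψ n)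
      have h2 : (fun m => (α m * ⟪φ m, ψ n⟫) • ψ m)
          = fun m => if m = n then α n • ψ n else 0 := by
        funext m
        by_cases hmn : m = n
        · subst hmn; rw [biorth, if_pos rfl, if_pos rfl, mul_one]
        · rw [biorth, if_neg hmn, if_neg hmn, mul_zero, zero_smul]
      rw [h2] at has
      exact has.unique (hasSum_ite_eq n _)
    constructor
    · -- forward
      intro hlam
      rw [Metric.mem_closure_iff] at hlam
      push_neg at hlam
      obtain ⟨δ, hδ, hfar⟩ := hlam
      have hfar' : ∀ n, δ ≤ ‖α n - lam‖ := by
        intro n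
        have := hfar (α n) ⟨n, rfl⟩
        rwa [dist_eq_norm, norm_sub_rev] at this
      have hne : ∀ n, α n - lam ≠ 0 := by
        intro n h0
        have := hfar' n
        rw [h0, norm_zero] at this
        linarith
      set r : ℕ → ℂ := fun n => (α n - lam)⁻¹ with hr
      have hrb : ∀ n, ‖r n‖ ≤ δ⁻¹ := by
        intro n
        rw [hr]
        simp only [norm_inv]
        exact inv_anti₀ hδ (hfar' n)
      set M := mulLp r δ⁻¹ hrb with hM
      refine ⟨T ∘L M ∘L S, ?_, ?_⟩
      · intro f hf
        set w : lp (fun _ : ℕ => ℂ) 2 :=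
          ⟨fun n => α n * ⟪φ n, f⟫, (summable_sq_iff_memℓp _).mp hf⟩ with hw
        have h1 : Hop f - lam • f = T (w - lam • S f) := by
          rw [map_sub, map_smul, hTS, hHopT f hf]
        have hRapp : ∀ x : H, (T ∘L M ∘L S) x = T (M (S x)) := fun _ => rfl
        rw [h1, hRapp, hST]
        have h2 : M (w - lam • S f) = S f := by
          apply lp.ext
          funext n
          rw [mulLp_apply]
          have h3 : (w - lam • S f) n = w n - lam * S f n := by
            rw [lp.coeFn_sub, lp.coeFn_smul]
            rfl
          rw [h3]
          have h4 : (w : ∀ _ : ℕ, ℂ) n = α n * ⟪φ n, f⟫ := rfl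
          have h0 : (α n - lam) * r n = 1 := mul_inv_cancel₀ (hne n)
          rw [h4, hcoS]
          calc r n * (α n * ⟪φ n, f⟫ - lam * ⟪φ n, f⟫)
              = ((α n - lam) * r n) * ⟪φ n, f⟫ := by ring
            _ = ⟪φ n, f⟫ := by rw [h0, one_mul]
        rw [h2, hTS]
      · intro h
        set u : lp (fun _ : ℕ => ℂ) 2 := S h with hu
        have hRh : (T ∘L M ∘L S) h = T (M u) := rfl
        have hcoR : ∀ n, ⟪φ n, (T ∘L M ∘L S) h⟫ = r n * u n := by
          intro n
          rw [hRh, hcoT, mulLp_apply]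
        have hbound : ∀ n, ‖α n * r n‖ ≤ 1 + ‖lam‖ * δ⁻¹ := by
          intro n
          have h0 : (α n - lam) * r n = 1 := mul_inv_cancel₀ (hne n)
          have h1 : α n * r n = 1 + lam * r n := by
            calc α n * r n = (α n - lam) * r n + lam * r n := by ring
              _ = 1 + lam * r n := by rw [h0]
          rw [h1]
          calc ‖(1:ℂ) + lam * r n‖ ≤ ‖(1:ℂ)‖ + ‖lam * r n‖ := norm_add_le _ _
            _ = 1 + ‖lam‖ * ‖r n‖ := by rw [norm_one, norm_mul]
            _ ≤ 1 + ‖lam‖ * δ⁻¹ := by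
                have := mul_le_mul_of_nonneg_left (hrb n) (norm_nonneg lam)
                linarith
        have hdomR : Summable fun n => ‖α n * ⟪φ n, (T ∘L M ∘L S) h⟫‖ ^ 2 := by
          have hfun : (fun n => α n * ⟪φ n, (T ∘L M ∘L S) h⟫)
              = fun n => (α n * r n) * u n := by
            funext n; rw [hcoR]; ring
          rw [summable_sq_iff_memℓp, hfun]
          exact mul_mem_l2 _ _ hbound u
        refine ⟨hdomR, ?_⟩
        set w' : lp (fun _ : ℕ => ℂ) 2 :=
          ⟨fun n => α n * ⟪φ n, (T ∘L M ∘L S) h⟫, (summable_sq_iff_memℓp _).mp hdomR⟩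
        have h1 : Hop ((T ∘L M ∘L S) h) = T w' := hHopT _ hdomR
        have h2 : lam • (T ∘L M ∘L S) h = T (lam • M u) := by
          rw [hRh, ← map_smul]
        rw [h1, h2, ← map_sub]
        have h3 : w' - lam • M u = u := by
          apply lp.ext
          funext n
          have h4 : (w' - lam • M u) n = w' n - lam * (M u) n := by
            rw [lp.coeFn_sub, lp.coeFn_smul]
            rfl
          rw [h4]
          have h5 : (w' : ∀ _ : ℕ, ℂ) n = α n * (r n * u n) := by
            have : (w' : ∀ _ : ℕ, ℂ) n = α n * ⟪φ n, (T ∘L M ∘L S) h⟫ := rfl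
            rw [this, hcoR]
          have h0 : (α n - lam) * r n = 1 := mul_inv_cancel₀ (hne n)
          rw [h5, mulLp_apply]
          set z : ℂ := (u : ∀ _ : ℕ, ℂ) n with hz
          calc α n * (r n * z) - lam * (r n * z)
              = ((α n - lam) * r n) * z := by ring
            _ = z := by rw [h0, one_mul]
        rw [h3, hu, hTS]
    · -- backward
      rintro ⟨Rlam, hR1, _⟩
      have key : ∀ n, (α n - lam) • Rlam (ψ n) = ψ n := by
        intro n
        have h1 := hR1 (ψ n) (domψ n)
        rw [hHopψ, ← sub_smul, map_smul] at h1
        exact h1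
      have hnorm : ∀ n, 1 ≤ ‖α n - lam‖ * ‖Rlam‖ := by
        intro n
        have h1 : ‖ψ n‖ ≤ ‖α n - lam‖ * (‖Rlam‖ * ‖ψ n‖) := by
          calc ‖ψ n‖ = ‖(α n - lam) • Rlam (ψ n)‖ := by rw [key n]
            _ = ‖α n - lam‖ * ‖Rlam (ψ n)‖ := norm_smul _ _
            _ ≤ ‖α n - lam‖ * (‖Rlam‖ * ‖ψ n‖) :=
                mul_le_mul_of_nonneg_left (Rlam.le_opNorm _) (norm_nonneg _)
        have hψpos : 0 < ‖ψ n‖ := norm_pos_iff.mpr (hψne n)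
        nlinarith
      have hRpos : 0 < ‖Rlam‖ := by
        rcases lt_or_eq_of_le (norm_nonneg Rlam) with h | h
        · exact h
        · exfalso
          have := hnorm 0
          rw [← h, mul_zero] at this
          linarith
      rw [Metric.mem_closure_iff]
      push_neg
      refine ⟨‖Rlam‖⁻¹, inv_pos.mpr hRpos, ?_⟩
      rintro _ ⟨n, rfl⟩
      rw [dist_eq_norm, norm_sub_rev, inv_eq_one_div, div_le_iff₀ hRpos]
      exact hnorm n
end

section
/- Let S be a closed densely defined operator on H with domain D, and equip D with the graph inner product ⟨f,g⟩_S = ⟨f,g⟩ + ⟨Sf,Sg⟩, making D a Hilbert space. If {eₙ} is an orthonormal basis of (D, ⟨·,·⟩_S) contained in dom(S*S), then the sequence ξₙ = (I + S*S)eₙ is a lower semi-frame of H with dom(ξ) ⊇ D; more precisely Σₙ |⟨f,ξₙ⟩|² = ‖f‖_S² ≥ ‖f‖² for all f ∈ D. -/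
open Filter

local notation "⟪" x ", " y "⟫" => @inner ℂ _ _ x y

section Aux

variable {H : Type*} [NormedAddCommGroup H] [InnerProductSpace ℂ H]

structure GraphSetup (H : Type*) [NormedAddCommGroup H] [InnerProductSpace ℂ H] : Type _ where
  domS : Set H
  S : H → H
  hzero : (0 : H) ∈ domS
  hadd : ∀ f ∈ domS, ∀ g ∈ domS, f + g ∈ domS ∧ S (f + g) = S f + S g
  hsmul : ∀ (c : ℂ), ∀ f ∈ domS, c • f ∈ domS ∧ S (c • f) = c • S f

namespace GraphSetup

variable (P : GraphSetup H)

def subm : Submodule ℂ H where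
  carrier := P.domS
  add_mem' := fun hf hg => (P.hadd _ hf _ hg).1
  zero_mem' := P.hzero
  smul_mem' := fun c f hf => (P.hsmul c f hf).1

def GD : Type _ := P.subm

instance : AddCommGroup P.GD := inferInstanceAs (AddCommGroup P.subm)
instance : Module ℂ P.GD := inferInstanceAs (Module ℂ P.subm)

def toH : P.GD →ₗ[ℂ] H := P.subm.subtype

lemma mem (x : P.GD) : P.toH x ∈ P.domS := (show P.subm from x).2

def Sv : P.GD →ₗ[ℂ] H where
  toFun x := P.S (P.toH x)
  map_add' x y := by
    have := (P.hadd _ (P.mem x) _ (P.mem y)).2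
    show P.S (P.toH (x + y)) = P.S (P.toH x) + P.S (P.toH y)
    rw [P.toH.map_add]; exact this
  map_smul' c x := by
    have := (P.hsmul c _ (P.mem x)).2
    show P.S (P.toH (c • x)) = c • P.S (P.toH x)
    rw [P.toH.map_smul]; exact this

noncomputable def core : InnerProductSpace.Core ℂ P.GD where
  inner x y := ⟪P.toH x, P.toH y⟫ + ⟪P.Sv x, P.Sv y⟫
  conj_inner_symm x y := by simp [inner_conj_symm, map_add]
  re_inner_nonneg x := by
    show 0 ≤ RCLike.re (⟪P.toH x, P.toH x⟫ + ⟪P.Sv x, P.Sv x⟫)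
    rw [map_add]
    exact add_nonneg inner_self_nonneg inner_self_nonneg
  add_left x y z := by simp [inner_add_left]; ring
  smul_left x y r := by simp [inner_smul_left]; ring
  definite x := by
    intro hx
    have h0 : (⟪P.toH x, P.toH x⟫ + ⟪P.Sv x, P.Sv x⟫) = 0 := hx
    have h1 : RCLike.re (⟪P.toH x, P.toH x⟫ + ⟪P.Sv x, P.Sv x⟫) = 0 := by rw [h0]; simp
    rw [map_add, inner_self_eq_norm_sq, inner_self_eq_norm_sq] at h1
    have h3 : P.toH x = 0 := by
      have : ‖P.toH x‖ = 0 := by nlinarith [sq_nonneg ‖P.toH x‖, sq_nonneg ‖P.Sv x‖, norm_nonneg (P.toH x)]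
      simpa using this
    exact Subtype.ext h3

noncomputable instance : NormedAddCommGroup P.GD := P.core.toNormedAddCommGroup
noncomputable instance : InnerProductSpace ℂ P.GD := 
  letI := P.core; InnerProductSpace.ofCore P.core.toCore

lemma inner_def (x y : P.GD) : ⟪x, y⟫ = ⟪P.toH x, P.toH y⟫ + ⟪P.Sv x, P.Sv y⟫ := rfl

lemma norm_sq (x : P.GD) : ‖x‖ ^ 2 = ‖P.toH x‖ ^ 2 + ‖P.Sv x‖ ^ 2 := by
  have h := inner_self_eq_norm_sq (𝕜 := ℂ) (x := x)
  rw [inner_def, map_add, inner_self_eq_norm_sq, inner_self_eq_norm_sq] at h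
  exact h.symm

lemma norm_toH_le (x : P.GD) : ‖P.toH x‖ ≤ ‖x‖ := by
  have h := P.norm_sq x
  nlinarith [sq_nonneg ‖P.Sv x‖, norm_nonneg (P.toH x), norm_nonneg x]

lemma norm_Sv_le (x : P.GD) : ‖P.Sv x‖ ≤ ‖x‖ := by
  have h := P.norm_sq x
  nlinarith [sq_nonneg ‖P.toH x‖, norm_nonneg (P.Sv x), norm_nonneg x]

noncomputable def toHL : P.GD →L[ℂ] H :=
  LinearMap.mkContinuous P.toH 1 (fun x => by rw [one_mul]; exact P.norm_toH_le x)

noncomputable def SvL : P.GD →L[ℂ] H :=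
  LinearMap.mkContinuous P.Sv 1 (fun x => by rw [one_mul]; exact P.norm_Sv_le x)

lemma complete [CompleteSpace H]
    (hclosed : ∀ (F : ℕ → H) (f h : H), (∀ k, F k ∈ P.domS) →
      Tendsto F atTop (nhds f) → Tendsto (fun k => P.S (F k)) atTop (nhds h) →
      f ∈ P.domS ∧ P.S f = h) : CompleteSpace P.GD := by
  apply Metric.complete_of_cauchySeq_tendsto
  intro u hu
  have hcau1 : CauchySeq (fun k => P.toH (u k)) :=
    (P.toHL.uniformContinuous.comp_cauchySeq hu)
  have hcau2 : CauchySeq (fun k => P.Sv (u k)) :=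
    (P.SvL.uniformContinuous.comp_cauchySeq hu)
  obtain ⟨f, hf⟩ := cauchySeq_tendsto_of_complete hcau1
  obtain ⟨g, hg⟩ := cauchySeq_tendsto_of_complete hcau2
  obtain ⟨hfmem, hSf⟩ := hclosed (fun k => P.toH (u k)) f g (fun k => P.mem (u k)) hf hg
  refine ⟨⟨f, hfmem⟩, ?_⟩
  set F : P.GD := ⟨f, hfmem⟩ with hF
  have htoHF : P.toH F = f := rfl
  have hSvF : P.Sv F = g := by show P.S f = g; exact hSf
  have key : Tendsto (fun k => ‖u k - F‖ ^ 2) atTop (nhds 0) := by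
    have h1 : Tendsto (fun k => ‖P.toH (u k) - f‖ ^ 2) atTop (nhds 0) := by
      have h := tendsto_iff_norm_sub_tendsto_zero.mp hf
      simpa using h.pow 2
    have h2 : Tendsto (fun k => ‖P.Sv (u k) - g‖ ^ 2) atTop (nhds 0) := by
      have h := tendsto_iff_norm_sub_tendsto_zero.mp hg
      simpa using h.pow 2
    have h3 := h1.add h2
    simp only [add_zero] at h3
    convert h3 using 2 with k
    rw [P.norm_sq, map_sub, map_sub, htoHF, hSvF]
  have hnorm : Tendsto (fun k => ‖u k - F‖) atTop (nhds 0) := by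
    have h := (Real.continuous_sqrt.tendsto 0).comp key
    simp only [Function.comp_def, Real.sqrt_zero] at h
    convert h using 2 with k
    rw [Real.sqrt_sq (norm_nonneg _)]
  exact tendsto_iff_norm_sub_tendsto_zero.mpr hnorm

end GraphSetup

end Aux

theorem stmt16' {H : Type*} [NormedAddCommGroup H] [InnerProductSpace ℂ H] [CompleteSpace H]
    (domS : Set H) (S : H → H)
    (hadd : ∀ f ∈ domS, ∀ g ∈ domS, f + g ∈ domS ∧ S (f + g) = S f + S g)
    (hsmul : ∀ (c : ℂ), ∀ f ∈ domS, c • f ∈ domS ∧ S (c • f) = c • S f)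
    (hdense : Dense domS)
    (hclosed : ∀ (F : ℕ → H) (f h : H), (∀ k, F k ∈ domS) →
      Tendsto F atTop (nhds f) → Tendsto (fun k => S (F k)) atTop (nhds h) →
      f ∈ domS ∧ S f = h)
    (e : ℕ → H) (he : ∀ n, e n ∈ domS)
    (horth : ∀ n m, ⟪e n, e m⟫ + ⟪S (e n), S (e m)⟫ = if n = m then (1 : ℂ) else 0)
    (htotal : ∀ f ∈ domS, (∀ n, ⟪e n, f⟫ + ⟪S (e n), S f⟫ = 0) → f = 0)
    (ξ : ℕ → H)
    (hξ : ∀ n, ∀ f ∈ domS, ⟪ξ n, f⟫ = ⟪e n, f⟫ + ⟪S (e n), S f⟫) :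
    (∀ f ∈ domS, HasSum (fun n => ‖⟪ξ n, f⟫‖ ^ 2) (‖f‖ ^ 2 + ‖S f‖ ^ 2)) ∧
    domS ⊆ {f : H | Summable fun n => ‖⟪ξ n, f⟫‖ ^ 2} ∧
    (∀ f ∈ domS, ‖f‖ ^ 2 ≤ ∑' n, ‖⟪ξ n, f⟫‖ ^ 2) := by
  have hzero : (0 : H) ∈ domS := by
    obtain ⟨f, hf⟩ := hdense.nonempty
    have := (hsmul 0 f hf).1
    simpa using this
  let P : GraphSetup H := ⟨domS, S, hzero, hadd, hsmul⟩
  haveI : CompleteSpace P.GD := P.complete hclosed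
  let e' : ℕ → P.GD := fun n => ⟨e n, he n⟩
  have horth' : Orthonormal ℂ e' := by
    rw [orthonormal_iff_ite]
    intro n m
    have h := horth n m
    rw [P.inner_def]
    exact h
  have hsp : (Submodule.span ℂ (Set.range e'))ᗮ = ⊥ := by
    rw [Submodule.eq_bot_iff]
    intro x hx
    have hx' : ∀ n, ⟪e' n, x⟫ = 0 := fun n =>
      (Submodule.mem_orthogonal _ _).mp hx (e' n) (Submodule.subset_span ⟨n, rfl⟩)
    have hx0 : P.toH x = 0 := by
      apply htotal _ (P.mem x)
      intro n
      have h := hx' n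
      rw [P.inner_def] at h
      exact h
    exact Subtype.ext hx0
  let b : HilbertBasis ℕ ℂ P.GD := HilbertBasis.mkOfOrthogonalEqBot horth' hsp
  have hb : ⇑b = e' := HilbertBasis.coe_mkOfOrthogonalEqBot horth' hsp
  have main : ∀ f ∈ domS, HasSum (fun n => ‖⟪ξ n, f⟫‖ ^ 2) (‖f‖ ^ 2 + ‖S f‖ ^ 2) := by
    intro f hf
    set F : P.GD := ⟨f, hf⟩ with hFdef
    have hsum := b.hasSum_inner_mul_inner F F
    have hz : ∀ n, ⟪b n, F⟫ = ⟪ξ n, f⟫ := by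
      intro n
      rw [hb]
      rw [P.inner_def]
      exact (hξ n f hf).symm
    have hterm : ∀ n, ⟪F, b n⟫ * ⟪b n, F⟫ = ((‖⟪ξ n, f⟫‖ ^ 2 : ℝ) : ℂ) := by
      intro n
      rw [← inner_conj_symm, hz n, RCLike.conj_mul]
      norm_cast
    have hFF : ⟪F, F⟫ = ((‖f‖ ^ 2 + ‖S f‖ ^ 2 : ℝ) : ℂ) := by
      rw [P.inner_def]
      rw [inner_self_eq_norm_sq_to_K, inner_self_eq_norm_sq_to_K]
      norm_cast
    rw [hFF] at hsum
    have hsum2 : HasSum (fun n => ((‖⟪ξ n, f⟫‖ ^ 2 : ℝ) : ℂ)) ((‖f‖ ^ 2 + ‖S f‖ ^ 2 : ℝ) : ℂ) := by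
      apply HasSum.congr_fun hsum (fun n => (hterm n).symm)
    exact (RCLike.hasSum_ofReal ℂ).mp hsum2
  refine ⟨main, ?_, ?_⟩
  · intro f hf
    exact (main f hf).summable
  · intro f hf
    have h := (main f hf).tsum_eq
    rw [h]
    nlinarith [sq_nonneg ‖S f‖]

/-- Let `S` be a closed densely defined operator with domain `D`, endowed with the graph
inner product `⟨f,g⟩_S = ⟨f,g⟩ + ⟨Sf,Sg⟩`. If `{eₙ}` is an orthonormal basis of
`(D, ⟨·,·⟩_S)` contained in `dom(S*S)` (encoded by: `ξₙ` satisfies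
`⟨f,ξₙ⟩ = ⟨f,eₙ⟩_S` for all `f ∈ D`, i.e. `ξₙ = (I+S*S)eₙ`), then `ξ` is a lower
semi-frame of `H` on `D`: `D ⊆ dom(ξ)` and
`Σₙ |⟨f,ξₙ⟩|² = ‖f‖_S² ≥ ‖f‖²` for all `f ∈ D`. -/
theorem stmt16 {H : Type*} [NormedAddCommGroup H] [InnerProductSpace ℂ H] [CompleteSpace H]
    (domS : Set H) (S : H → H)
    (hadd : ∀ f ∈ domS, ∀ g ∈ domS, f + g ∈ domS ∧ S (f + g) = S f + S g)
    (hsmul : ∀ (c : ℂ), ∀ f ∈ domS, c • f ∈ domS ∧ S (c • f) = c • S f)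
    (hdense : Dense domS)
    (hclosed : ∀ (F : ℕ → H) (f h : H), (∀ k, F k ∈ domS) →
      Tendsto F atTop (nhds f) → Tendsto (fun k => S (F k)) atTop (nhds h) →
      f ∈ domS ∧ S f = h)
    (e : ℕ → H) (he : ∀ n, e n ∈ domS)
    (horth : ∀ n m, ⟪e n, e m⟫ + ⟪S (e n), S (e m)⟫ = if n = m then (1 : ℂ) else 0)
    (htotal : ∀ f ∈ domS, (∀ n, ⟪e n, f⟫ + ⟪S (e n), S f⟫ = 0) → f = 0)
    (ξ : ℕ → H)
    (hξ : ∀ n, ∀ f ∈ domS, ⟪ξ n, f⟫ = ⟪e n, f⟫ + ⟪S (e n), S f⟫) :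
    (∀ f ∈ domS, HasSum (fun n => ‖⟪ξ n, f⟫‖ ^ 2) (‖f‖ ^ 2 + ‖S f‖ ^ 2)) ∧
    domS ⊆ {f : H | Summable fun n => ‖⟪ξ n, f⟫‖ ^ 2} ∧
    (∀ f ∈ domS, ‖f‖ ^ 2 ≤ ∑' n, ‖⟪ξ n, f⟫‖ ^ 2) := by
  exact stmt16' domS S hadd hsmul hdense hclosed e he horth htotal ξ hξ
end

section
/- Let {eₙ} be an ONB of H and V a densely defined operator with eₙ ∈ dom(V); set ξₙ = Veₙ and let V₀ be the restriction of V to the linear span of {eₙ}. Then dom(ξ) = dom(V₀*) and C_ξ f = {⟨V₀* f, eₙ⟩} for all f ∈ dom(V₀*); consequently dom(ξ) is dense if and only if V₀ is closable. -/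
open Filter

local notation "⟪" x ", " y "⟫" => @inner ℂ _ _ x y

/-- Let `{eₙ}` be an ONB of `H`, `V` an operator defined (and linear) on `span{eₙ}`, and
`ξₙ = Veₙ`; let `V₀` be the restriction of `V` to `span{eₙ}`. Then
`dom(ξ) = dom(V₀*)`, `C_ξ f = {⟨V₀*f, eₙ⟩}` for `f ∈ dom(V₀*)`, and `dom(ξ)` is dense if
and only if `V₀` is closable. Here `f ∈ dom(V₀*)` with `V₀*f = h` is encoded by
`⟨V₀x, f⟩ = ⟨x, h⟩` for all `x ∈ span{eₙ}`. -/
theorem stmt17 {H : Type*} [NormedAddCommGroup H] [InnerProductSpace ℂ H] [CompleteSpace H]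
    (e : ℕ → H) (he : Orthonormal ℂ e)
    (hetotal : (Submodule.span ℂ (Set.range e)).topologicalClosure = ⊤)
    (V : H → H)
    (hVadd : ∀ x ∈ (Submodule.span ℂ (Set.range e) : Set H),
      ∀ y ∈ (Submodule.span ℂ (Set.range e) : Set H), V (x + y) = V x + V y)
    (hVsmul : ∀ (c : ℂ), ∀ x ∈ (Submodule.span ℂ (Set.range e) : Set H), V (c • x) = c • V x)
    (ξ : ℕ → H) (hξ : ∀ n, ξ n = V (e n)) :
    -- dom(ξ) = dom(V₀*)
    ({f : H | Summable fun n => ‖⟪ξ n, f⟫‖ ^ 2}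
      = {f : H | ∃ h : H, ∀ x ∈ (Submodule.span ℂ (Set.range e) : Set H),
          ⟪V x, f⟫ = ⟪x, h⟫}) ∧
    -- C_ξ f = {⟨V₀*f, eₙ⟩}
    (∀ f h : H, (∀ x ∈ (Submodule.span ℂ (Set.range e) : Set H), ⟪V x, f⟫ = ⟪x, h⟫) →
      ∀ n, ⟪ξ n, f⟫ = ⟪e n, h⟫) ∧
    -- dom(ξ) dense ↔ V₀ closable
    (Dense {f : H | Summable fun n => ‖⟪ξ n, f⟫‖ ^ 2} ↔
      ∀ F : ℕ → H, (∀ k, F k ∈ (Submodule.span ℂ (Set.range e) : Set H)) →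
        Tendsto F atTop (nhds 0) →
        ∀ h : H, Tendsto (fun k => V (F k)) atTop (nhds h) → h = 0) := by
  set M := Submodule.span ℂ (Set.range e) with hM
  have heM : ∀ n, e n ∈ M := fun n => Submodule.subset_span ⟨n, rfl⟩
  have hV0 : V 0 = 0 := by
    have := hVsmul 0 (e 0) (heM 0)
    simpa using this
  -- part 2
  have part2 : ∀ f h : H, (∀ x ∈ (M : Set H), ⟪V x, f⟫ = ⟪x, h⟫) →
      ∀ n, ⟪ξ n, f⟫ = ⟪e n, h⟫ := by
    intro f h hw n
    rw [hξ]
    exact hw (e n) (heM n)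
  -- Hilbert basis
  let b : HilbertBasis ℕ ℂ H := HilbertBasis.mk he hetotal.ge
  have hb : ∀ n, b n = e n := fun n => congrFun (HilbertBasis.coe_mk he hetotal.ge) n
  -- part 1
  have part1 : {f : H | Summable fun n => ‖⟪ξ n, f⟫‖ ^ 2}
      = {f : H | ∃ h : H, ∀ x ∈ (M : Set H), ⟪V x, f⟫ = ⟪x, h⟫} := by
    ext f
    simp only [Set.mem_setOf_eq]
    constructor
    · intro hsum
      have hmem : Memℓp (fun n => ⟪ξ n, f⟫) 2 := by
        apply memℓp_gen
        have h2 : ENNReal.toReal 2 = ((2 : ℕ) : ℝ) := by norm_num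
        rw [h2]
        simpa [Real.rpow_natCast] using hsum
      set h : H := b.repr.symm ⟨fun n => ⟪ξ n, f⟫, hmem⟩ with hh
      have hcoef : ∀ n, ⟪e n, h⟫ = ⟪ξ n, f⟫ := by
        intro n
        have := b.repr_apply_apply h n
        rw [hh, b.repr.apply_symm_apply] at this
        rw [← hb n, ← this]
      refine ⟨h, ?_⟩
      intro x hx
      induction hx using Submodule.span_induction with
      | mem x hx =>
          obtain ⟨n, rfl⟩ := hx
          rw [← hξ n, hcoef n]
      | zero => simp [hV0]
      | add x y hx hy ihx ihy =>
          rw [hVadd x hx y hy, inner_add_left, inner_add_left, ihx, ihy]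
      | smul c x hx ihx =>
          rw [hVsmul c x hx, inner_smul_left, inner_smul_left, ihx]
    · intro ⟨h, hw⟩
      have := part2 f h hw
      have hsum : Summable fun n => ‖⟪e n, h⟫‖ ^ 2 := he.inner_products_summable h
      exact hsum.congr fun n => by rw [this n]
  refine ⟨part1, part2, ?_⟩
  -- the domain as a submodule
  let Sm : Submodule ℂ H :=
    { carrier := {f : H | ∃ h : H, ∀ x ∈ (M : Set H), ⟪V x, f⟫ = ⟪x, h⟫}
      add_mem' := by
        rintro f g ⟨h1, hw1⟩ ⟨h2, hw2⟩
        exact ⟨h1 + h2, fun x hx => by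
          rw [inner_add_right, inner_add_right, hw1 x hx, hw2 x hx]⟩
      zero_mem' := ⟨0, fun x hx => by simp⟩
      smul_mem' := by
        rintro c f ⟨h, hw⟩
        exact ⟨c • h, fun x hx => by
          rw [inner_smul_right, inner_smul_right, hw x hx]⟩ }
  rw [part1]
  constructor
  · -- dense → closable
    intro hd F hFmem hF0 h hlim
    have hz : ∀ f ∈ (Sm : Set H), ⟪h, f⟫ = 0 := by
      rintro f ⟨w, hw⟩
      have l1 : Tendsto (fun k => ⟪V (F k), f⟫) atTop (nhds ⟪h, f⟫) :=
        hlim.inner tendsto_const_nhds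
      have l2 : Tendsto (fun k => ⟪V (F k), f⟫) atTop (nhds (0 : ℂ)) := by
        have : (fun k => ⟪V (F k), f⟫) = fun k => ⟪F k, w⟫ := by
          funext k; exact hw (F k) (hFmem k)
        rw [this]
        simpa using hF0.inner (tendsto_const_nhds (x := w))
      exact tendsto_nhds_unique l1 l2
    have : (fun x : H => ⟪h, x⟫) = fun _ => (0 : ℂ) := by
      apply Continuous.ext_on hd
      · exact continuous_const.inner continuous_id
      · exact continuous_const
      · exact hz
    have := congrFun this h
    simpa [inner_self_eq_zero] using this
  · -- closable → dense
    intro hc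
    rw [show {f : H | ∃ h : H, ∀ x ∈ (M : Set H), ⟪V x, f⟫ = ⟪x, h⟫} = (Sm : Set H) from rfl]
    rw [Submodule.dense_iff_topologicalClosure_eq_top, Submodule.topologicalClosure_eq_top_iff]
    rw [Submodule.eq_bot_iff]
    intro g hg
    rw [Submodule.mem_orthogonal] at hg
    -- graph of V₀ in the product Hilbert space
    let E := WithLp.prodContinuousLinearEquiv 2 ℂ H H
    let Gr : Submodule ℂ (WithLp 2 (H × H)) :=
      { carrier := {q | ∃ x ∈ (M : Set H), E q = (x, V x)}
        add_mem' := by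
          rintro p q ⟨x, hx, hp⟩ ⟨y, hy, hq⟩
          refine ⟨x + y, M.add_mem hx hy, ?_⟩
          rw [map_add, hp, hq, hVadd x hx y hy, Prod.mk_add_mk]
        zero_mem' := ⟨0, M.zero_mem, by rw [map_zero, hV0]; rfl⟩
        smul_mem' := by
          rintro c p ⟨x, hx, hp⟩
          refine ⟨c • x, M.smul_mem c hx, ?_⟩
          rw [map_smul, hp, hVsmul c x hx, Prod.smul_mk] }
    have hq0 : E.symm (0, g) ∈ Grᗮᗮ := by
      rw [Submodule.mem_orthogonal]
      rintro u hu
      rw [Submodule.mem_orthogonal] at hu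
      have husnd : (u : WithLp 2 (H × H)).ofLp.2 ∈ Sm := by
        refine ⟨-(u : WithLp 2 (H × H)).ofLp.1, fun x hx => ?_⟩
        have hmem : E.symm (x, V x) ∈ Gr := ⟨x, hx, by simp⟩
        have := hu _ hmem
        rw [WithLp.prod_inner_apply] at this
        have hfst : (E.symm (x, V x) : WithLp 2 (H × H)).ofLp.1 = x := rfl
        have hsnd : (E.symm (x, V x) : WithLp 2 (H × H)).ofLp.2 = V x := rfl
        rw [hfst, hsnd] at this
        rw [inner_neg_right]
        exact eq_neg_of_add_eq_zero_right this
      rw [WithLp.prod_inner_apply]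
      have h1 : ((E.symm (0, g) : WithLp 2 (H × H))).ofLp.1 = (0 : H) := rfl
      have h2 : ((E.symm (0, g) : WithLp 2 (H × H))).ofLp.2 = g := rfl
      rw [h1, h2, inner_zero_right, zero_add]
      exact hg _ husnd
    rw [Submodule.orthogonal_orthogonal_eq_closure] at hq0
    have hcl : E.symm (0, g) ∈ closure (Gr : Set (WithLp 2 (H × H))) := by
      rw [← Submodule.topologicalClosure_coe]; exact hq0
    haveI : FrechetUrysohnSpace (WithLp 2 (H × H)) := by
      set_option synthInstance.maxHeartbeats 1000000 in infer_instance
    rw [mem_closure_iff_seq_limit] at hcl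
    obtain ⟨q, hqmem, hqlim⟩ := hcl
    choose F hFmem hFeq using hqmem
    have hElim : Tendsto (fun k => E (q k)) atTop (nhds (E (E.symm (0, g)))) :=
      (E.continuous.tendsto _).comp hqlim
    rw [E.apply_symm_apply] at hElim
    have hF0 : Tendsto F atTop (nhds 0) := by
      have := (continuous_fst.tendsto _).comp hElim
      simpa [Function.comp_def, hFeq] using this
    have hVg : Tendsto (fun k => V (F k)) atTop (nhds g) := by
      have := (continuous_snd.tendsto _).comp hElim
      simpa [Function.comp_def, hFeq] using this
    exact hc F hFmem hF0 g hVg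
end

section
/- Let ξ be a Bessel sequence of H with upper bound B and η a sequence such that Σₙ ⟨f,ξₙ⟩⟨ηₙ,g⟩ = ⟨f,g⟩ for all f,g ∈ H. Then η is a lower semi-frame with lower bound B⁻¹: ‖g‖² ≤ B Σₙ |⟨g,ηₙ⟩|² for all g ∈ H. -/
local notation "⟪" x ", " y "⟫" => @inner ℂ _ _ x y

/-- If `ξ` is a Bessel sequence with bound `B` and `η` is a sequence with
`Σₙ ⟨f,ξₙ⟩⟨ηₙ,g⟩ = ⟨f,g⟩` for all `f,g ∈ H`, then `η` is a lower semi-frame with lower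
bound `B⁻¹`: `‖g‖² ≤ B·Σₙ |⟨g,ηₙ⟩|²` for all `g ∈ H` (trivially true when the sum is
infinite). -/
theorem stmt19 {H : Type*} [NormedAddCommGroup H] [InnerProductSpace ℂ H] [CompleteSpace H]
    (ξ η : ℕ → H) (B : ℝ) (hB : 0 < B)
    (hBessel : ∀ f : H, (Summable fun n => ‖⟪ξ n, f⟫‖ ^ 2) ∧
      ∑' n, ‖⟪ξ n, f⟫‖ ^ 2 ≤ B * ‖f‖ ^ 2)
    (hrep : ∀ f g : H, HasSum (fun n => ⟪ξ n, f⟫ * ⟪g, η n⟫) ⟪g, f⟫) :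
    ∀ g : H, (Summable fun n => ‖⟪η n, g⟫‖ ^ 2) → ‖g‖ ^ 2 ≤ B * ∑' n, ‖⟪η n, g⟫‖ ^ 2 := by
  intro g hS
  set A : ℝ := ∑' n, ‖⟪ξ n, g⟫‖ ^ 2 with hA
  set S : ℝ := ∑' n, ‖⟪η n, g⟫‖ ^ 2 with hSdef
  have hSnonneg : 0 ≤ S := tsum_nonneg fun n => by positivity
  have hAnonneg : 0 ≤ A := tsum_nonneg fun n => by positivity
  -- key bound: ‖g‖^2 ≤ √A * √S
  have key : ‖g‖ ^ 2 ≤ Real.sqrt A * Real.sqrt S := by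
    have h1 : Filter.Tendsto (fun s : Finset ℕ => ‖∑ n ∈ s, ⟪ξ n, g⟫ * ⟪g, η n⟫‖)
        Filter.atTop (nhds ‖(⟪g, g⟫ : ℂ)‖) := (hrep g g).norm
    have h2 : ∀ s : Finset ℕ, ‖∑ n ∈ s, ⟪ξ n, g⟫ * ⟪g, η n⟫‖ ≤ Real.sqrt A * Real.sqrt S := by
      intro s
      calc ‖∑ n ∈ s, ⟪ξ n, g⟫ * ⟪g, η n⟫‖ ≤ ∑ n ∈ s, ‖⟪ξ n, g⟫‖ * ‖⟪g, η n⟫‖ := by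
            refine (norm_sum_le _ _).trans ?_
            exact Finset.sum_le_sum fun n _ => (norm_mul_le _ _)
        _ ≤ Real.sqrt (∑ n ∈ s, ‖⟪ξ n, g⟫‖ ^ 2) * Real.sqrt (∑ n ∈ s, ‖⟪g, η n⟫‖ ^ 2) :=
            Real.sum_mul_le_sqrt_mul_sqrt s _ _
        _ ≤ Real.sqrt A * Real.sqrt S := by
            have e1 : ∑ n ∈ s, ‖⟪ξ n, g⟫‖ ^ 2 ≤ A :=
              Summable.sum_le_tsum s (fun n _ => by positivity) (hBessel g).1
            have e2 : ∑ n ∈ s, ‖⟪g, η n⟫‖ ^ 2 ≤ S := by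
              have : ∀ n, ‖(⟪g, η n⟫ : ℂ)‖ ^ 2 = ‖(⟪η n, g⟫ : ℂ)‖ ^ 2 := fun n => by
                rw [norm_inner_symm]
              simp_rw [this]
              exact Summable.sum_le_tsum s (fun n _ => by positivity) hS
            exact mul_le_mul (Real.sqrt_le_sqrt e1) (Real.sqrt_le_sqrt e2)
              (Real.sqrt_nonneg _) (Real.sqrt_nonneg _)
    have : ‖(⟪g, g⟫ : ℂ)‖ ≤ Real.sqrt A * Real.sqrt S := le_of_tendsto' h1 h2
    rwa [inner_self_eq_norm_sq_to_K, norm_pow, RCLike.norm_ofReal, abs_norm] at this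
  have hAB : Real.sqrt A ≤ Real.sqrt B * ‖g‖ := by
    have : A ≤ B * ‖g‖ ^ 2 := (hBessel g).2
    calc Real.sqrt A ≤ Real.sqrt (B * ‖g‖ ^ 2) := Real.sqrt_le_sqrt this
      _ = Real.sqrt B * ‖g‖ := by
          rw [Real.sqrt_mul hB.le, Real.sqrt_sq (norm_nonneg _)]
  have key2 : ‖g‖ ^ 2 ≤ Real.sqrt B * ‖g‖ * Real.sqrt S :=
    key.trans (mul_le_mul_of_nonneg_right hAB (Real.sqrt_nonneg _))
  rcases eq_or_ne g 0 with rfl | hg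
  · simpa using mul_nonneg hB.le hSnonneg
  · have hgpos : 0 < ‖g‖ := norm_pos_iff.mpr hg
    have h3 : ‖g‖ ≤ Real.sqrt B * Real.sqrt S := by
      have := key2
      rw [pow_two] at this
      nlinarith [Real.sqrt_nonneg B, Real.sqrt_nonneg S]
    calc ‖g‖ ^ 2 ≤ (Real.sqrt B * Real.sqrt S) ^ 2 :=
          pow_le_pow_left₀ (norm_nonneg _) h3 2
      _ = B * S := by
          rw [mul_pow, Real.sq_sqrt hB.le, Real.sq_sqrt hSnonneg]
end
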